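/- Let m ≥ 1 be an integer, n ∈ ℕ, σ ∈ (0,1), α = n + σ, β = α + 1, ω > 0, κ ≥ 1. Let b ∈ h^β_per and suppose that for every λ ∈ ℂ with Re λ ≥ ω and every f ∈ h^α_per there exists a unique u ∈ h^{2m+α}_per with λu + (−1)^m·b·u^{(2m)} = f, satisfying ‖u‖_{2m+α} ≤ κ‖f‖_α and |λ|·‖u‖_α ≤ κ‖f‖_α. Then there exists K > 0, depending only on κ and ‖b‖_β, such that for every λ with Re λ ≥ ω and every f ∈ h^β_per there exists a unique u ∈ h^{2m+β}_per with λu + (−1)^m·b·u^{(2m)} = f, satisfying ‖u‖_{2m+β} ≤ K‖f‖_β and |λ|·‖u‖_β ≤ K‖f‖_β. -/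

import Mathlib

open Real

/-- A function `f : ℝ → ℂ` is `2π`-periodic. -/
def Per (f : ℝ → ℂ) : Prop := ∀ x, f (x + 2 * π) = f x

/-- The set of Hölder quotients of `g` with exponent `α`. -/
def holderSet (α : ℝ) (g : ℝ → ℂ) : Set ℝ :=
  {r | ∃ x y : ℝ, x ≠ y ∧ r = ‖g x - g y‖ / |x - y| ^ α}

/-- `[g]_α < ∞`: the Hölder quotients are bounded. -/
def HolderFin (α : ℝ) (g : ℝ → ℂ) : Prop := BddAbove (holderSet α g)

/-- The Hölder seminorm `[g]_α`. -/
noncomputable def hSemi (α : ℝ) (g : ℝ → ℂ) : ℝ := sSup (holderSet α g)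

/-- The little-Hölder-α condition. -/
def LittleHolder (α : ℝ) (g : ℝ → ℂ) : Prop :=
  ∀ η > (0 : ℝ), ∃ δ > (0 : ℝ), ∀ x y : ℝ, 0 < |x - y| → |x - y| < δ →
    ‖g x - g y‖ / |x - y| ^ α < η

/-- Sup-norm of `g`. -/
noncomputable def supAbs (g : ℝ → ℂ) : ℝ := ⨆ x : ℝ, ‖g x‖

/-- The norm `‖f‖_{k+α} = Σ_{j=0}^k sup |f^{(j)}| + [f^{(k)}]_α`. -/
noncomputable def cNorm (k : ℕ) (α : ℝ) (f : ℝ → ℂ) : ℝ :=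
  (∑ j ∈ Finset.range (k + 1), supAbs (iteratedDeriv j f)) + hSemi α (iteratedDeriv k f)

/-- Membership in `C^{k+α}_per` for `α ∈ (0,1)`. -/
def CMem (k : ℕ) (α : ℝ) (f : ℝ → ℂ) : Prop :=
  Per f ∧ ContDiff ℝ k f ∧ HolderFin α (iteratedDeriv k f)

/-- Membership in `h^{k+α}_per`. -/
def hMem (k : ℕ) (α : ℝ) (f : ℝ → ℂ) : Prop :=
  CMem k α f ∧ LittleHolder α (iteratedDeriv k f)

section Aux

/-! ### Auxiliary lemmas -/


section Basic

variable {σ : ℝ} (hσ0 : 0 < σ) (hσ1 : σ < 1)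

lemma rpow_abs_pos {x y : ℝ} (hxy : x ≠ y) : 0 < |x - y| ^ σ :=
  Real.rpow_pos_of_pos (by simpa [sub_eq_zero] using hxy) σ

lemma hSemi_nonneg (g : ℝ → ℂ) : 0 ≤ hSemi σ g := by
  apply Real.sSup_nonneg
  rintro r ⟨x, y, hxy, rfl⟩
  positivity

lemma hSemi_le {M : ℝ} {g : ℝ → ℂ} (hM : 0 ≤ M)
    (h : ∀ x y : ℝ, x ≠ y → ‖g x - g y‖ ≤ M * |x - y| ^ σ) :
    hSemi σ g ≤ M := by
  apply Real.sSup_le _ hM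
  rintro r ⟨x, y, hxy, rfl⟩
  rw [div_le_iff₀ (rpow_abs_pos hxy)]
  exact h x y hxy

lemma holderFin_of {M : ℝ} {g : ℝ → ℂ}
    (h : ∀ x y : ℝ, x ≠ y → ‖g x - g y‖ ≤ M * |x - y| ^ σ) :
    HolderFin σ g := by
  refine ⟨M, ?_⟩
  rintro r ⟨x, y, hxy, rfl⟩
  rw [div_le_iff₀ (rpow_abs_pos hxy)]
  exact h x y hxy

lemma abs_sub_le_hSemi {g : ℝ → ℂ} (hf : HolderFin σ g) (x y : ℝ) :
    ‖g x - g y‖ ≤ hSemi σ g * |x - y| ^ σ := by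
  rcases eq_or_ne x y with rfl | hxy
  · simpa using mul_nonneg (hSemi_nonneg g) (Real.rpow_nonneg le_rfl σ)
  · have hmem : ‖g x - g y‖ / |x - y| ^ σ ∈ holderSet σ g := ⟨x, y, hxy, rfl⟩
    have := le_csSup hf hmem
    rw [div_le_iff₀ (rpow_abs_pos hxy)] at this
    exact this

lemma supAbs_nonneg (g : ℝ → ℂ) : 0 ≤ supAbs g := by
  apply Real.iSup_nonneg
  intro x; positivity

lemma supAbs_le {M : ℝ} {g : ℝ → ℂ} (hM : 0 ≤ M) (h : ∀ x, ‖g x‖ ≤ M) :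
    supAbs g ≤ M := Real.iSup_le h hM

lemma Per.natCast {g : ℝ → ℂ} (hg : Per g) : Function.Periodic g (2 * π) := hg

lemma per_exists_bound {g : ℝ → ℂ} (hg : Per g) (hc : Continuous g) :
    ∃ M : ℝ, 0 ≤ M ∧ ∀ x, ‖g x‖ ≤ M := by
  have h2π : (0 : ℝ) < 2 * π := by positivity
  obtain ⟨M, hM⟩ := (isCompact_Icc (a := (0:ℝ)) (b := 2 * π)).exists_bound_of_continuousOn
    hc.continuousOn
  refine ⟨max M 0, le_max_right _ _, fun x => ?_⟩
  obtain ⟨y, hy, hxy⟩ := (hg.natCast).exists_mem_Ico₀ h2π x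
  rw [hxy]
  calc ‖g y‖ = ‖g y‖ := rfl
    _ ≤ M := hM y (Set.mem_Icc.2 ⟨(Set.mem_Ico.1 hy).1, le_of_lt ((Set.mem_Ico.1 hy).2)⟩)
    _ ≤ max M 0 := le_max_left _ _

lemma le_supAbs {g : ℝ → ℂ} (hg : Per g) (hc : Continuous g) (x : ℝ) :
    ‖g x‖ ≤ supAbs g := by
  obtain ⟨M, _, hM⟩ := per_exists_bound hg hc
  exact le_ciSup ⟨M, by rintro r ⟨x', rfl⟩; exact hM x'⟩ x

end Basic

section IterDeriv

lemma iterD_sub {k : ℕ} {f g : ℝ → ℂ} (hf : ContDiff ℝ k f) (hg : ContDiff ℝ k g) :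
    iteratedDeriv k (fun x => f x - g x) = fun x => iteratedDeriv k f x - iteratedDeriv k g x := by
  funext x
  have : (fun x => f x - g x) = f - g := rfl
  rw [this, ← iteratedDerivWithin_univ, ← iteratedDerivWithin_univ, ← iteratedDerivWithin_univ]
  exact iteratedDerivWithin_sub (Set.mem_univ x) uniqueDiffOn_univ
    hf.contDiffWithinAt hg.contDiffWithinAt

lemma iterD_add {k : ℕ} {f g : ℝ → ℂ} (hf : ContDiff ℝ k f) (hg : ContDiff ℝ k g) :
    iteratedDeriv k (fun x => f x + g x) = fun x => iteratedDeriv k f x + iteratedDeriv k g x := by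
  funext x
  have : (fun x => f x + g x) = f + g := rfl
  rw [this, ← iteratedDerivWithin_univ, ← iteratedDerivWithin_univ, ← iteratedDerivWithin_univ]
  exact iteratedDerivWithin_add (Set.mem_univ x) uniqueDiffOn_univ
    hf.contDiffWithinAt hg.contDiffWithinAt

lemma iterD_cmul (a : ℂ) {k : ℕ} {f : ℝ → ℂ} (hf : ContDiff ℝ k f) :
    iteratedDeriv k (fun x => a * f x) = fun x => a * iteratedDeriv k f x := by
  funext x
  have : (fun x => a * f x) = a • f := rfl
  rw [this, ← iteratedDerivWithin_univ, ← iteratedDerivWithin_univ]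
  rw [iteratedDerivWithin_const_smul (Set.mem_univ x) uniqueDiffOn_univ a hf.contDiffWithinAt]
  rfl

lemma iterD_translate (k : ℕ) (f : ℝ → ℂ) (h : ℝ) :
    iteratedDeriv k (fun x => f (x + h)) = fun x => iteratedDeriv k f (x + h) :=
  iteratedDeriv_comp_add_const k f h

lemma iterD_iterD (p j : ℕ) (f : ℝ → ℂ) :
    iteratedDeriv j (iteratedDeriv p f) = iteratedDeriv (p + j) f := by
  induction j with
  | zero => simp
  | succ j ih => rw [iteratedDeriv_succ, ih, ← iteratedDeriv_succ, Nat.add_assoc]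

lemma perDeriv {f : ℝ → ℂ} (hf : Per f) : Per (deriv f) := by
  intro x
  have h1 : deriv (fun y => f (y + 2 * π)) x = deriv f (x + 2 * π) :=
    deriv_comp_add_const f (2 * π) x
  have h2 : (fun y => f (y + 2 * π)) = f := funext hf
  rw [← h1, h2]

lemma perIterD {f : ℝ → ℂ} (hf : Per f) (j : ℕ) : Per (iteratedDeriv j f) := by
  induction j with
  | zero => simpa using hf
  | succ j ih => rw [iteratedDeriv_succ]; exact perDeriv ih

lemma hMem.per {k : ℕ} {σ : ℝ} {f : ℝ → ℂ} (hf : hMem k σ f) : Per f := hf.1.1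

lemma hMem.cd {k : ℕ} {σ : ℝ} {f : ℝ → ℂ} (hf : hMem k σ f) : ContDiff ℝ k f := hf.1.2.1

lemma hMem.contIterD {k : ℕ} {σ : ℝ} {f : ℝ → ℂ} (hf : hMem k σ f) {j : ℕ} (hj : j ≤ k) :
    Continuous (iteratedDeriv j f) :=
  hf.cd.continuous_iteratedDeriv j (by exact_mod_cast hj)

lemma hMem.diffIterD {k : ℕ} {σ : ℝ} {f : ℝ → ℂ} (hf : hMem k σ f) {j : ℕ} (hj : j < k) :
    Differentiable ℝ (iteratedDeriv j f) :=
  hf.cd.differentiable_iteratedDeriv j (by exact_mod_cast hj)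

lemma hMem.abs_le {k : ℕ} {σ : ℝ} {f : ℝ → ℂ} (hf : hMem k σ f) {j : ℕ} (hj : j ≤ k) (x : ℝ) :
    ‖iteratedDeriv j f x‖ ≤ supAbs (iteratedDeriv j f) :=
  le_supAbs (perIterD hf.per j) (hf.contIterD hj) x

lemma supAbs_le_cNorm {k : ℕ} {σ : ℝ} {f : ℝ → ℂ} {j : ℕ} (hj : j ≤ k) :
    supAbs (iteratedDeriv j f) ≤ cNorm k σ f := by
  unfold cNorm
  have h1 : supAbs (iteratedDeriv j f) ≤
      ∑ i ∈ Finset.range (k + 1), supAbs (iteratedDeriv i f) :=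
    Finset.single_le_sum (f := fun i => supAbs (iteratedDeriv i f))
      (fun i _ => supAbs_nonneg _) (Finset.mem_range.2 (Nat.lt_succ_of_le hj))
  linarith [hSemi_nonneg (σ := σ) (iteratedDeriv k f)]

lemma hSemi_le_cNorm {k : ℕ} {σ : ℝ} {f : ℝ → ℂ} :
    hSemi σ (iteratedDeriv k f) ≤ cNorm k σ f := by
  unfold cNorm
  have : 0 ≤ ∑ i ∈ Finset.range (k + 1), supAbs (iteratedDeriv i f) :=
    Finset.sum_nonneg fun i _ => supAbs_nonneg _
  linarith

lemma cNorm_nonneg (k : ℕ) (σ : ℝ) (f : ℝ → ℂ) : 0 ≤ cNorm k σ f := by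
  unfold cNorm
  have : 0 ≤ ∑ i ∈ Finset.range (k + 1), supAbs (iteratedDeriv i f) :=
    Finset.sum_nonneg fun i _ => supAbs_nonneg _
  linarith [hSemi_nonneg (σ := σ) (iteratedDeriv k f)]

lemma hMem.abs_le_cNorm {k : ℕ} {σ : ℝ} {f : ℝ → ℂ} (hf : hMem k σ f) {j : ℕ} (hj : j ≤ k)
    (x : ℝ) : ‖iteratedDeriv j f x‖ ≤ cNorm k σ f :=
  (hf.abs_le hj x).trans (supAbs_le_cNorm hj)

lemma hMem.abs_sub_le {k : ℕ} {σ : ℝ} {f : ℝ → ℂ} (hf : hMem k σ f) (x y : ℝ) :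
    ‖iteratedDeriv k f x - iteratedDeriv k f y‖ ≤ cNorm k σ f * |x - y| ^ σ := by
  refine (abs_sub_le_hSemi hf.1.2.2 x y).trans ?_
  exact mul_le_mul_of_nonneg_right hSemi_le_cNorm (Real.rpow_nonneg (abs_nonneg _) σ)

end IterDeriv

section Spaces

variable {σ : ℝ}

lemma littleHolder_of (hσ0 : 0 < σ) {g : ℝ → ℂ}
    (h : ∀ η > (0:ℝ), ∃ δ > (0:ℝ), ∀ x y : ℝ, x ≠ y → |x - y| < δ →
      ‖g x - g y‖ ≤ η * |x - y| ^ σ) : LittleHolder σ g := by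
  intro η hη
  obtain ⟨δ, hδ, hb⟩ := h (η/2) (by linarith)
  refine ⟨δ, hδ, fun x y hxy hlt => ?_⟩
  have hne : x ≠ y := by
    intro hcon; rw [hcon] at hxy; simp at hxy
  have := hb x y hne hlt
  rw [div_lt_iff₀ (rpow_abs_pos hne)]
  calc ‖g x - g y‖ ≤ η/2 * |x - y| ^ σ := this
    _ < η * |x - y| ^ σ := by
        have := rpow_abs_pos (σ := σ) hne
        nlinarith

lemma littleHolder_bound {g : ℝ → ℂ} (hg : LittleHolder σ g) :
    ∀ η > (0:ℝ), ∃ δ > (0:ℝ), ∀ x y : ℝ, x ≠ y → |x - y| < δ →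
      ‖g x - g y‖ ≤ η * |x - y| ^ σ := by
  intro η hη
  obtain ⟨δ, hδ, hb⟩ := hg η hη
  refine ⟨δ, hδ, fun x y hne hlt => ?_⟩
  have h0 : 0 < |x - y| := abs_sub_pos.2 hne
  have := hb x y h0 hlt
  rw [div_lt_iff₀ (rpow_abs_pos hne)] at this
  exact this.le

lemma littleHolder_sum (hσ0 : 0 < σ) {g₁ g₂ : ℝ → ℂ} (h₁ : LittleHolder σ g₁)
    (h₂ : LittleHolder σ g₂) : LittleHolder σ (fun x => g₁ x - g₂ x) := by
  apply littleHolder_of hσ0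
  intro η hη
  obtain ⟨δ₁, hδ₁, hb₁⟩ := littleHolder_bound h₁ (η/2) (by linarith)
  obtain ⟨δ₂, hδ₂, hb₂⟩ := littleHolder_bound h₂ (η/2) (by linarith)
  refine ⟨min δ₁ δ₂, lt_min hδ₁ hδ₂, fun x y hne hlt => ?_⟩
  have e : g₁ x - g₂ x - (g₁ y - g₂ y) = (g₁ x - g₁ y) - (g₂ x - g₂ y) := by ring
  rw [e]
  calc ‖_‖ ≤ ‖g₁ x - g₁ y‖ + ‖g₂ x - g₂ y‖ :=
        norm_sub_le _ _
    _ ≤ η/2 * |x - y| ^ σ + η/2 * |x - y| ^ σ :=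
        add_le_add (hb₁ x y hne (hlt.trans_le (min_le_left _ _)))
          (hb₂ x y hne (hlt.trans_le (min_le_right _ _)))
    _ = η * |x - y| ^ σ := by ring

lemma hMem_sub (hσ0 : 0 < σ) {k : ℕ} {f g : ℝ → ℂ} (hf : hMem k σ f) (hg : hMem k σ g) :
    hMem k σ (fun x => f x - g x) := by
  have hd := iterD_sub hf.cd hg.cd
  refine ⟨⟨fun x => by simp [hf.per x, hg.per x], hf.cd.sub hg.cd, ?_⟩, ?_⟩
  · rw [hd]
    apply holderFin_of (M := cNorm k σ f + cNorm k σ g)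
    intro x y hxy
    have e : iteratedDeriv k f x - iteratedDeriv k g x -
        (iteratedDeriv k f y - iteratedDeriv k g y) =
        (iteratedDeriv k f x - iteratedDeriv k f y) -
        (iteratedDeriv k g x - iteratedDeriv k g y) := by ring
    rw [e]
    calc ‖_‖ ≤ _ + _ := norm_sub_le _ _
      _ ≤ cNorm k σ f * |x - y| ^ σ + cNorm k σ g * |x - y| ^ σ :=
          add_le_add (hf.abs_sub_le x y) (hg.abs_sub_le x y)
      _ = (cNorm k σ f + cNorm k σ g) * |x - y| ^ σ := by ring
  · rw [hd]
    exact littleHolder_sum hσ0 hf.2 hg.2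

lemma cNorm_sub_le (hσ0 : 0 < σ) {k : ℕ} {f g : ℝ → ℂ} (hf : hMem k σ f) (hg : hMem k σ g) :
    cNorm k σ (fun x => f x - g x) ≤ cNorm k σ f + cNorm k σ g := by
  have hd := fun j (hj : j ≤ k) => iterD_sub (hf.cd.of_le (by exact_mod_cast hj))
    (hg.cd.of_le (by exact_mod_cast hj))
  unfold cNorm
  have hsum : ∀ j ∈ Finset.range (k+1), supAbs (iteratedDeriv j (fun x => f x - g x)) ≤
      supAbs (iteratedDeriv j f) + supAbs (iteratedDeriv j g) := by
    intro j hj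
    have hj' : j ≤ k := Nat.lt_succ_iff.1 (Finset.mem_range.1 hj)
    rw [hd j hj']
    apply supAbs_le (add_nonneg (supAbs_nonneg _) (supAbs_nonneg _))
    intro x
    calc ‖_‖ ≤ _ + _ := norm_sub_le _ _
      _ ≤ supAbs (iteratedDeriv j f) + supAbs (iteratedDeriv j g) :=
          add_le_add (hf.abs_le hj' x) (hg.abs_le hj' x)
  have h1 : ∑ j ∈ Finset.range (k+1), supAbs (iteratedDeriv j (fun x => f x - g x)) ≤
      ∑ j ∈ Finset.range (k+1), (supAbs (iteratedDeriv j f) + supAbs (iteratedDeriv j g)) :=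
    Finset.sum_le_sum hsum
  rw [Finset.sum_add_distrib] at h1
  have h2 : hSemi σ (iteratedDeriv k (fun x => f x - g x)) ≤
      hSemi σ (iteratedDeriv k f) + hSemi σ (iteratedDeriv k g) := by
    rw [hd k le_rfl]
    apply hSemi_le (add_nonneg (hSemi_nonneg _) (hSemi_nonneg _))
    · intro x y hxy
      have e : iteratedDeriv k f x - iteratedDeriv k g x -
          (iteratedDeriv k f y - iteratedDeriv k g y) =
          (iteratedDeriv k f x - iteratedDeriv k f y) -
          (iteratedDeriv k g x - iteratedDeriv k g y) := by ring
      rw [e]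
      calc ‖_‖ ≤ _ + _ := norm_sub_le _ _
        _ ≤ hSemi σ (iteratedDeriv k f) * |x - y| ^ σ +
            hSemi σ (iteratedDeriv k g) * |x - y| ^ σ :=
            add_le_add (abs_sub_le_hSemi hf.1.2.2 x y) (abs_sub_le_hSemi hg.1.2.2 x y)
        _ = _ := by ring
  linarith

lemma hMem_cmul (hσ0 : 0 < σ) (a : ℂ) {k : ℕ} {f : ℝ → ℂ} (hf : hMem k σ f) :
    hMem k σ (fun x => a * f x) := by
  have hd := iterD_cmul a hf.cd
  refine ⟨⟨fun x => by simp [hf.per x], ?_, ?_⟩, ?_⟩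
  · exact (contDiff_const (c := a)).mul hf.cd
  · rw [hd]
    apply holderFin_of (M := ‖a‖ * cNorm k σ f)
    intro x y hxy
    rw [show a * iteratedDeriv k f x - a * iteratedDeriv k f y
        = a * (iteratedDeriv k f x - iteratedDeriv k f y) by ring, norm_mul, mul_assoc]
    exact mul_le_mul_of_nonneg_left (hf.abs_sub_le x y) (norm_nonneg _)
  · rw [hd]
    apply littleHolder_of hσ0
    intro η hη
    have ha : 0 < ‖a‖ + 1 := by positivity
    obtain ⟨δ, hδ, hb⟩ := littleHolder_bound hf.2 (η / (‖a‖ + 1)) (by positivity)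
    refine ⟨δ, hδ, fun x y hne hlt => ?_⟩
    rw [show a * iteratedDeriv k f x - a * iteratedDeriv k f y
        = a * (iteratedDeriv k f x - iteratedDeriv k f y) by ring, norm_mul]
    calc ‖a‖ * ‖iteratedDeriv k f x - iteratedDeriv k f y‖
        ≤ ‖a‖ * (η / (‖a‖ + 1) * |x - y| ^ σ) :=
          mul_le_mul_of_nonneg_left (hb x y hne hlt) (norm_nonneg _)
      _ ≤ η * |x - y| ^ σ := by
          have h1 : ‖a‖ * (η / (‖a‖ + 1)) ≤ η := by
            rw [mul_div_assoc']
            rw [div_le_iff₀ ha]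
            nlinarith [norm_nonneg a]
          have h2 : (0:ℝ) ≤ |x - y| ^ σ := Real.rpow_nonneg (abs_nonneg _) σ
          nlinarith

lemma cNorm_cmul_le (hσ0 : 0 < σ) (a : ℂ) {k : ℕ} {f : ℝ → ℂ} (hf : hMem k σ f) :
    cNorm k σ (fun x => a * f x) ≤ ‖a‖ * cNorm k σ f := by
  have hd := fun j (hj : j ≤ k) => iterD_cmul a (hf.cd.of_le (by exact_mod_cast hj))
  unfold cNorm
  have h1 : ∑ j ∈ Finset.range (k+1), supAbs (iteratedDeriv j (fun x => a * f x)) ≤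
      ∑ j ∈ Finset.range (k+1), ‖a‖ * supAbs (iteratedDeriv j f) := by
    apply Finset.sum_le_sum
    intro j hj
    have hj' : j ≤ k := Nat.lt_succ_iff.1 (Finset.mem_range.1 hj)
    rw [hd j hj']
    apply supAbs_le (mul_nonneg (norm_nonneg _) (supAbs_nonneg _))
    intro x
    rw [norm_mul]
    exact mul_le_mul_of_nonneg_left (hf.abs_le hj' x) (norm_nonneg _)
  have h2 : hSemi σ (iteratedDeriv k (fun x => a * f x)) ≤
      ‖a‖ * hSemi σ (iteratedDeriv k f) := by
    rw [hd k le_rfl]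
    apply hSemi_le (mul_nonneg (norm_nonneg _) (hSemi_nonneg _))
    intro x y hxy
    rw [show a * iteratedDeriv k f x - a * iteratedDeriv k f y
        = a * (iteratedDeriv k f x - iteratedDeriv k f y) by ring, norm_mul, mul_assoc]
    exact mul_le_mul_of_nonneg_left (abs_sub_le_hSemi hf.1.2.2 x y) (norm_nonneg _)
  rw [← Finset.mul_sum] at h1
  unfold cNorm at *
  nlinarith [supAbs_nonneg f]

lemma hMem_add (hσ0 : 0 < σ) {k : ℕ} {f g : ℝ → ℂ} (hf : hMem k σ f) (hg : hMem k σ g) :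
    hMem k σ (fun x => f x + g x) := by
  have e : (fun x => f x + g x) = fun x => f x - (-1 : ℂ) * g x := by funext x; ring
  rw [e]
  exact hMem_sub hσ0 hf (hMem_cmul hσ0 (-1) hg)

lemma cNorm_add_le (hσ0 : 0 < σ) {k : ℕ} {f g : ℝ → ℂ} (hf : hMem k σ f) (hg : hMem k σ g) :
    cNorm k σ (fun x => f x + g x) ≤ cNorm k σ f + cNorm k σ g := by
  have e : (fun x => f x + g x) = fun x => f x - (-1 : ℂ) * g x := by funext x; ring
  rw [e]
  have := cNorm_sub_le hσ0 hf (hMem_cmul hσ0 (-1) hg)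
  have h2 := cNorm_cmul_le hσ0 (-1 : ℂ) hg
  simp only [norm_neg, norm_one, one_mul] at h2
  linarith

lemma hMem_translate (hσ0 : 0 < σ) (h : ℝ) {k : ℕ} {f : ℝ → ℂ} (hf : hMem k σ f) :
    hMem k σ (fun x => f (x + h)) := by
  have hd := iterD_translate k f h
  refine ⟨⟨fun x => by simp only []; rw [show x + 2 * π + h = x + h + 2*π by ring, hf.per (x+h)],
    ?_, ?_⟩, ?_⟩
  · exact hf.cd.comp ((contDiff_id (E := ℝ)).add contDiff_const)
  · rw [hd]
    apply holderFin_of (M := cNorm k σ f)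
    intro x y hxy
    have : |x + h - (y + h)| = |x - y| := by ring_nf
    calc ‖_‖ ≤ cNorm k σ f * |x + h - (y + h)| ^ σ := hf.abs_sub_le (x+h) (y+h)
      _ = cNorm k σ f * |x - y| ^ σ := by rw [this]
  · rw [hd]
    apply littleHolder_of hσ0
    intro η hη
    obtain ⟨δ, hδ, hb⟩ := littleHolder_bound hf.2 η hη
    refine ⟨δ, hδ, fun x y hne hlt => ?_⟩
    have hne' : x + h ≠ y + h := by intro hc; apply hne; linarith
    have habs : |x + h - (y + h)| = |x - y| := by ring_nf
    have := hb (x+h) (y+h) hne' (by rw [habs]; exact hlt)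
    rw [habs] at this
    exact this

lemma cNorm_translate_le (hσ0 : 0 < σ) (h : ℝ) {k : ℕ} {f : ℝ → ℂ} (hf : hMem k σ f) :
    cNorm k σ (fun x => f (x + h)) ≤ cNorm k σ f := by
  unfold cNorm
  have h1 : ∀ j ∈ Finset.range (k+1), supAbs (iteratedDeriv j (fun x => f (x + h))) ≤
      supAbs (iteratedDeriv j f) := by
    intro j hj
    have hj' : j ≤ k := Nat.lt_succ_iff.1 (Finset.mem_range.1 hj)
    rw [iterD_translate j f h]
    exact supAbs_le (supAbs_nonneg _) (fun x => hf.abs_le hj' (x + h))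
  have h2 : hSemi σ (iteratedDeriv k (fun x => f (x + h))) ≤ hSemi σ (iteratedDeriv k f) := by
    rw [iterD_translate k f h]
    apply hSemi_le (hSemi_nonneg _)
    intro x y hxy
    have hne' : x + h ≠ y + h := by intro hc; apply hxy; linarith
    have habs : |x + h - (y + h)| = |x - y| := by ring_nf
    have := abs_sub_le_hSemi hf.1.2.2 (x + h) (y + h)
    rw [habs] at this
    exact this
  exact add_le_add (Finset.sum_le_sum h1) h2

lemma cNorm_succ (k : ℕ) (f : ℝ → ℂ) :
    cNorm (k+1) σ f = supAbs f + cNorm k σ (deriv f) := by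
  unfold cNorm
  have h1 : ∀ j : ℕ, iteratedDeriv j (deriv f) = iteratedDeriv (j+1) f :=
    fun j => (iteratedDeriv_succ' (n := j) (f := f)).symm
  rw [Finset.sum_range_succ' (fun j => supAbs (iteratedDeriv j f)) (k+1)]
  simp only [h1, iteratedDeriv_zero]
  ring

lemma hMem_deriv (hσ0 : 0 < σ) {k : ℕ} {f : ℝ → ℂ} (hf : hMem (k+1) σ f) :
    hMem k σ (deriv f) := by
  have h1 : ∀ j : ℕ, iteratedDeriv j (deriv f) = iteratedDeriv (j+1) f :=
    fun j => (iteratedDeriv_succ' (n := j) (f := f)).symm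
  refine ⟨⟨perDeriv hf.per, ?_, ?_⟩, ?_⟩
  · rw [contDiff_nat_iff_iteratedDeriv]
    constructor
    · intro m hm
      rw [h1 m]
      exact hf.contIterD (by omega)
    · intro m hm
      rw [h1 m]
      exact hf.diffIterD (by omega)
  · rw [h1 k]
    exact hf.1.2.2
  · rw [h1 k]
    exact hf.2

lemma mvt_bound {g g' : ℝ → ℂ} {C a b : ℝ} (hab : a ≤ b)
    (hg : ∀ x ∈ Set.Icc a b, HasDerivAt g (g' x) x)
    (hC : ∀ x ∈ Set.Icc a b, ‖g' x‖ ≤ C) :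
    ‖g b - g a‖ ≤ C * (b - a) := by
  have := norm_image_sub_le_of_norm_deriv_le_segment'
    (f := g) (f' := g') (a := a) (b := b)
    (fun x hx => (hg x hx).hasDerivWithinAt)
    (fun x hx => hC x (Set.Ico_subset_Icc_self hx)) b (Set.right_mem_Icc.2 hab)
  simpa using this

lemma lipBound {g : ℝ → ℂ} (hg : Differentiable ℝ g) {M : ℝ}
    (hM : ∀ t, ‖deriv g t‖ ≤ M) (x y : ℝ) :
    ‖g x - g y‖ ≤ M * |x - y| := by
  rcases le_total y x with hyx | hxy
  · have := mvt_bound hyx (fun t _ => (hg t).hasDerivAt) (fun t _ => hM t)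
    rwa [abs_of_nonneg (by linarith)]
  · have h := mvt_bound hxy (fun t _ => (hg t).hasDerivAt) (fun t _ => hM t)
    have h2 : ‖g x - g y‖ = ‖g y - g x‖ :=
      norm_sub_rev _ _
    rw [h2, abs_of_nonpos (by linarith), neg_sub]
    exact h

lemma holder_of_lip (hσ0 : 0 < σ) (hσ1 : σ < 1) {g : ℝ → ℂ} {M S : ℝ}
    (hM : 0 ≤ M) (hS : 0 ≤ S)
    (hlip : ∀ x y : ℝ, ‖g x - g y‖ ≤ M * |x - y|)
    (hbd : ∀ x, ‖g x‖ ≤ S) :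
    ∀ x y : ℝ, x ≠ y → ‖g x - g y‖ ≤ (M + 2*S) * |x - y| ^ σ := by
  intro x y hxy
  have hd : 0 < |x - y| := abs_sub_pos.2 hxy
  rcases le_total |x - y| 1 with hle | hge
  · have h1 : |x - y| ≤ |x - y| ^ σ := by
      nth_rewrite 1 [← Real.rpow_one |x - y|]
      exact Real.rpow_le_rpow_of_exponent_ge hd hle hσ1.le
    calc ‖g x - g y‖ ≤ M * |x - y| := hlip x y
      _ ≤ M * |x - y| ^ σ := mul_le_mul_of_nonneg_left h1 hM
      _ ≤ (M + 2*S) * |x - y| ^ σ := by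
          have := Real.rpow_nonneg (abs_nonneg (x - y)) σ
          nlinarith
  · have h1 : (1:ℝ) ≤ |x - y| ^ σ := Real.one_le_rpow hge hσ0.le
    calc ‖g x - g y‖ ≤ ‖g x‖ + ‖g y‖ :=
          norm_sub_le _ _
      _ ≤ 2 * S := by linarith [hbd x, hbd y]
      _ ≤ (M + 2*S) * |x - y| ^ σ := by nlinarith

lemma littleHolder_of_lip (hσ0 : 0 < σ) (hσ1 : σ < 1) {g : ℝ → ℂ} {M : ℝ} (hM : 0 ≤ M)
    (hlip : ∀ x y : ℝ, ‖g x - g y‖ ≤ M * |x - y|) :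
    LittleHolder σ g := by
  apply littleHolder_of hσ0
  intro η hη
  have h1σ : 0 < 1 - σ := by linarith
  set δ : ℝ := min 1 ((η / (M+1)) ^ (1/(1-σ) : ℝ)) with hδdef
  have hδpos : 0 < δ := by
    apply lt_min one_pos
    apply Real.rpow_pos_of_pos
    positivity
  refine ⟨δ, hδpos, fun x y hne hlt => ?_⟩
  have hd : 0 < |x - y| := abs_sub_pos.2 hne
  have key : M * |x - y| ^ ((1:ℝ) - σ) ≤ η := by
    have hmono : |x - y| ^ ((1:ℝ) - σ) ≤ δ ^ ((1:ℝ) - σ) :=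
      Real.rpow_le_rpow (abs_nonneg _) hlt.le (by linarith)
    have hδle : δ ^ ((1:ℝ) - σ) ≤ η / (M+1) := by
      calc δ ^ ((1:ℝ) - σ) ≤ ((η / (M+1)) ^ (1/(1-σ) : ℝ)) ^ ((1:ℝ) - σ) :=
            Real.rpow_le_rpow (le_of_lt hδpos) (min_le_right _ _) (by linarith)
        _ = (η / (M+1)) ^ ((1/(1-σ)) * (1 - σ) : ℝ) := by
            rw [← Real.rpow_mul (by positivity)]
        _ = η / (M+1) := by
            rw [one_div, inv_mul_cancel₀ (by linarith : (1:ℝ) - σ ≠ 0), Real.rpow_one]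
    have : M * |x - y| ^ ((1:ℝ) - σ) ≤ M * (η / (M+1)) :=
      mul_le_mul_of_nonneg_left (hmono.trans hδle) hM
    refine this.trans ?_
    rw [mul_div_assoc', div_le_iff₀ (by positivity)]
    nlinarith
  calc ‖g x - g y‖ ≤ M * |x - y| := hlip x y
    _ = M * |x - y| ^ ((1:ℝ) - σ) * |x - y| ^ σ := by
        rw [mul_assoc, ← Real.rpow_add hd]
        norm_num
    _ ≤ η * |x - y| ^ σ :=
        mul_le_mul_of_nonneg_right key (Real.rpow_nonneg (abs_nonneg _) σ)

lemma hMem_down (hσ0 : 0 < σ) (hσ1 : σ < 1) {k : ℕ} {f : ℝ → ℂ} (hf : hMem (k+1) σ f) :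
    hMem k σ f ∧ cNorm k σ f ≤ 4 * cNorm (k+1) σ f := by
  set M := supAbs (iteratedDeriv (k+1) f) with hMdef
  set S := supAbs (iteratedDeriv k f) with hSdef
  have hdiff : Differentiable ℝ (iteratedDeriv k f) := hf.diffIterD (Nat.lt_succ_self k)
  have hderiv : deriv (iteratedDeriv k f) = iteratedDeriv (k+1) f := (iteratedDeriv_succ).symm
  have hMb : ∀ t, ‖deriv (iteratedDeriv k f) t‖ ≤ M := by
    intro t; rw [hderiv]; exact hf.abs_le le_rfl t
  have hlip := lipBound hdiff hMb
  have hM0 : 0 ≤ M := supAbs_nonneg _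
  have hS0 : 0 ≤ S := supAbs_nonneg _
  have hSb : ∀ x, ‖iteratedDeriv k f x‖ ≤ S := fun x => hf.abs_le (by omega) x
  have hhol := holder_of_lip hσ0 hσ1 hM0 hS0 hlip hSb
  have hMem' : hMem k σ f := by
    refine ⟨⟨hf.per, hf.cd.of_le (by exact_mod_cast Nat.le_succ k), holderFin_of hhol⟩, ?_⟩
    exact littleHolder_of_lip hσ0 hσ1 hM0 hlip
  refine ⟨hMem', ?_⟩
  have h2 : hSemi σ (iteratedDeriv k f) ≤ M + 2*S := hSemi_le (by linarith) hhol
  have h3 : ∑ j ∈ Finset.range (k+1), supAbs (iteratedDeriv j f) ≤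
      ∑ j ∈ Finset.range (k+2), supAbs (iteratedDeriv j f) := by
    apply Finset.sum_le_sum_of_subset_of_nonneg
    · intro i hi
      simp only [Finset.mem_range] at *
      omega
    · intro i _ _
      exact supAbs_nonneg _
  have hMle : M ≤ cNorm (k+1) σ f := supAbs_le_cNorm le_rfl
  have hSle : S ≤ cNorm (k+1) σ f := supAbs_le_cNorm (Nat.le_succ k)
  have h4 : ∑ j ∈ Finset.range (k+2), supAbs (iteratedDeriv j f) ≤ cNorm (k+1) σ f := by
    unfold cNorm
    linarith [hSemi_nonneg (σ := σ) (iteratedDeriv (k+1) f)]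
  have hnn := cNorm_nonneg (k+1) σ f
  unfold cNorm at hMle hSle h4 hnn ⊢
  linarith

lemma hMem_down_many (hσ0 : 0 < σ) (hσ1 : σ < 1) (d : ℕ) {k : ℕ} {f : ℝ → ℂ}
    (hf : hMem (k + d) σ f) :
    hMem k σ f ∧ cNorm k σ f ≤ 4 ^ d * cNorm (k + d) σ f := by
  induction d with
  | zero => exact ⟨hf, by simpa using le_refl (cNorm k σ f)⟩
  | succ d ih =>
    have hf' : hMem ((k + d) + 1) σ f := by
      rw [show (k+d)+1 = k + (d+1) by omega]; exact hf
    obtain ⟨h1, h2⟩ := hMem_down hσ0 hσ1 hf'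
    obtain ⟨h3, h4⟩ := ih h1
    refine ⟨h3, ?_⟩
    have h5 : cNorm (k + d) σ f ≤ 4 * cNorm (k + (d+1)) σ f := by
      rw [show k + (d+1) = (k+d)+1 by omega]; exact h2
    have h6 : (0:ℝ) < 4 ^ d := by positivity
    calc cNorm k σ f ≤ 4 ^ d * cNorm (k + d) σ f := h4
      _ ≤ 4 ^ d * (4 * cNorm (k + (d+1)) σ f) := mul_le_mul_of_nonneg_left h5 (le_of_lt h6)
      _ = 4 ^ (d+1) * cNorm (k + (d+1)) σ f := by ring

lemma hMem_iterD (hσ0 : 0 < σ) (p : ℕ) {k : ℕ} {f : ℝ → ℂ} (hf : hMem (p + k) σ f) :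
    hMem k σ (iteratedDeriv p f) ∧ cNorm k σ (iteratedDeriv p f) ≤ cNorm (p + k) σ f := by
  induction p generalizing f with
  | zero =>
    simp only [iteratedDeriv_zero]
    rw [show 0 + k = k from by omega] at hf ⊢
    exact ⟨hf, le_refl _⟩
  | succ p ih =>
    have hf1 : hMem ((p + k) + 1) σ f := by
      rw [show (p+k)+1 = (p+1)+k by omega]; exact hf
    have hd : hMem (p + k) σ (deriv f) := hMem_deriv hσ0 hf1
    obtain ⟨h1, h2⟩ := ih hd
    have he : iteratedDeriv (p+1) f = iteratedDeriv p (deriv f) := iteratedDeriv_succ'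
    have h3 : cNorm (p + k) σ (deriv f) ≤ cNorm ((p+k)+1) σ f := by
      rw [cNorm_succ]
      linarith [supAbs_nonneg f]
    rw [he]
    refine ⟨h1, ?_⟩
    calc cNorm k σ (iteratedDeriv p (deriv f)) ≤ cNorm (p + k) σ (deriv f) := h2
      _ ≤ cNorm ((p+k)+1) σ f := h3
      _ = cNorm ((p+1) + k) σ f := by rw [show (p+k)+1 = (p+1)+k by omega]

lemma cNorm_zero (f : ℝ → ℂ) : cNorm 0 σ f = supAbs f + hSemi σ f := by
  unfold cNorm
  simp

lemma prodBound (hσ0 : 0 < σ) (hσ1 : σ < 1) (k : ℕ) : ∃ C : ℝ, 1 ≤ C ∧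
    ∀ F G : ℝ → ℂ, hMem k σ F → hMem k σ G →
      hMem k σ (fun x => F x * G x) ∧
      cNorm k σ (fun x => F x * G x) ≤ C * cNorm k σ F * cNorm k σ G := by
  induction k with
  | zero =>
    refine ⟨2, by norm_num, ?_⟩
    intro F G hF hG
    have hcF : Continuous F := by
      have := hF.contIterD (le_refl 0); simpa using this
    have hcG : Continuous G := by
      have := hG.contIterD (le_refl 0); simpa using this
    set SF := supAbs F with hSF
    set SG := supAbs G with hSG
    have hSF0 : 0 ≤ SF := supAbs_nonneg _
    have hSG0 : 0 ≤ SG := supAbs_nonneg _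
    have hFb : ∀ x, ‖F x‖ ≤ SF := fun x => le_supAbs hF.per hcF x
    have hGb : ∀ x, ‖G x‖ ≤ SG := fun x => le_supAbs hG.per hcG x
    have hFs : ∀ x y, ‖F x - F y‖ ≤ hSemi σ F * |x - y| ^ σ := by
      intro x y
      have := abs_sub_le_hSemi (σ := σ) (g := F) ?_ x y
      · exact this
      · have := hF.1.2.2; simpa using this
    have hGs : ∀ x y, ‖G x - G y‖ ≤ hSemi σ G * |x - y| ^ σ := by
      intro x y
      have := abs_sub_le_hSemi (σ := σ) (g := G) ?_ x y
      · exact this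
      · have := hG.1.2.2; simpa using this
    have key : ∀ x y : ℝ, ‖F x * G x - F y * G y‖ ≤
        (SF * hSemi σ G + SG * hSemi σ F) * |x - y| ^ σ := by
      intro x y
      have e : F x * G x - F y * G y = F x * (G x - G y) + G y * (F x - F y) := by ring
      rw [e]
      calc ‖_‖ ≤ ‖F x * (G x - G y)‖ + ‖G y * (F x - F y)‖ :=
            norm_add_le _ _
        _ = ‖F x‖ * ‖G x - G y‖ +
            ‖G y‖ * ‖F x - F y‖ := by rw [norm_mul, norm_mul]
        _ ≤ SF * (hSemi σ G * |x - y| ^ σ) + SG * (hSemi σ F * |x - y| ^ σ) := by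
            have h1 := mul_le_mul (hFb x) (hGs x y) (norm_nonneg _) hSF0
            have h2 := mul_le_mul (hGb y) (hFs x y) (norm_nonneg _) hSG0
            linarith
        _ = _ := by ring
    have hsemi0 : 0 ≤ SF * hSemi σ G + SG * hSemi σ F := by
      have := hSemi_nonneg (σ := σ) F
      have := hSemi_nonneg (σ := σ) G
      positivity
    have hlittle : LittleHolder σ (fun x => F x * G x) := by
      apply littleHolder_of hσ0
      intro η hη
      have hGl : LittleHolder σ G := by have := hG.2; simpa using this
      have hFl : LittleHolder σ F := by have := hF.2; simpa using this
      obtain ⟨δ₁, hδ₁, hb₁⟩ := littleHolder_bound hGl (η / (2 * (SF + 1))) (by positivity)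
      obtain ⟨δ₂, hδ₂, hb₂⟩ := littleHolder_bound hFl (η / (2 * (SG + 1))) (by positivity)
      refine ⟨min δ₁ δ₂, lt_min hδ₁ hδ₂, fun x y hne hlt => ?_⟩
      have e : F x * G x - F y * G y = F x * (G x - G y) + G y * (F x - F y) := by ring
      rw [e]
      have hrp : 0 ≤ |x - y| ^ σ := Real.rpow_nonneg (abs_nonneg _) σ
      calc ‖_‖ ≤ ‖F x‖ * ‖G x - G y‖ +
            ‖G y‖ * ‖F x - F y‖ := by
            rw [← norm_mul, ← norm_mul]; exact norm_add_le _ _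
        _ ≤ SF * (η / (2 * (SF + 1)) * |x - y| ^ σ) +
            SG * (η / (2 * (SG + 1)) * |x - y| ^ σ) := by
            have h1 := mul_le_mul (hFb x) (hb₁ x y hne (hlt.trans_le (min_le_left _ _)))
              (norm_nonneg _) hSF0
            have h2 := mul_le_mul (hGb y) (hb₂ x y hne (hlt.trans_le (min_le_right _ _)))
              (norm_nonneg _) hSG0
            linarith
        _ ≤ η/2 * |x - y| ^ σ + η/2 * |x - y| ^ σ := by
            have k1 : SF * (η / (2 * (SF + 1))) ≤ η/2 := by
              rw [mul_div_assoc', div_le_div_iff₀ (by positivity) (by norm_num)]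
              nlinarith
            have k2 : SG * (η / (2 * (SG + 1))) ≤ η/2 := by
              rw [mul_div_assoc', div_le_div_iff₀ (by positivity) (by norm_num)]
              nlinarith
            nlinarith [mul_le_mul_of_nonneg_right k1 hrp, mul_le_mul_of_nonneg_right k2 hrp]
        _ = η * |x - y| ^ σ := by ring
    have hmem : hMem 0 σ (fun x => F x * G x) := by
      refine ⟨⟨fun x => by simp [hF.per x, hG.per x], ?_, ?_⟩, ?_⟩
      · exact_mod_cast contDiff_zero.2 (hcF.mul hcG)
      · simp only [iteratedDeriv_zero]
        exact holderFin_of (fun x y hxy => key x y)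
      · simpa using hlittle
    refine ⟨hmem, ?_⟩
    rw [cNorm_zero, cNorm_zero, cNorm_zero]
    have h1 : supAbs (fun x => F x * G x) ≤ SF * SG := by
      apply supAbs_le (by positivity)
      intro x
      rw [norm_mul]
      exact mul_le_mul (hFb x) (hGb x) (norm_nonneg _) hSF0
    have h2 : hSemi σ (fun x => F x * G x) ≤ SF * hSemi σ G + SG * hSemi σ F :=
      hSemi_le hsemi0 (fun x y _ => key x y)
    have := hSemi_nonneg (σ := σ) F
    have := hSemi_nonneg (σ := σ) G
    nlinarith
  | succ k ih =>
    obtain ⟨C, hC1, hC⟩ := ih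
    refine ⟨8*C + 1, by linarith, ?_⟩
    intro F G hF hG
    have hone : (1 : WithTop ℕ∞) ≤ ((k+1 : ℕ) : WithTop ℕ∞) := by exact_mod_cast Nat.succ_le_succ (Nat.zero_le k)
    have hdF : Differentiable ℝ F := hF.cd.differentiable (zero_lt_one.trans_le hone).ne'
    have hdG : Differentiable ℝ G := hG.cd.differentiable (zero_lt_one.trans_le hone).ne'
    have hF' : hMem k σ (deriv F) := hMem_deriv hσ0 hF
    have hG' : hMem k σ (deriv G) := hMem_deriv hσ0 hG
    obtain ⟨hFd, hFdn⟩ := hMem_down hσ0 hσ1 hF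
    obtain ⟨hGd, hGdn⟩ := hMem_down hσ0 hσ1 hG
    obtain ⟨hp1, hp1n⟩ := hC (deriv F) G hF' hGd
    obtain ⟨hp2, hp2n⟩ := hC F (deriv G) hFd hG'
    have hsum : hMem k σ (fun x => deriv F x * G x + F x * deriv G x) :=
      hMem_add hσ0 hp1 hp2
    have hde : deriv (fun x => F x * G x) = fun x => deriv F x * G x + F x * deriv G x :=
      funext fun x => deriv_mul (hdF x) (hdG x)
    have hiter : iteratedDeriv (k+1) (fun x => F x * G x) =
        iteratedDeriv k (fun x => deriv F x * G x + F x * deriv G x) := by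
      rw [iteratedDeriv_succ', hde]
    have hmem : hMem (k+1) σ (fun x => F x * G x) := by
      refine ⟨⟨fun x => by simp [hF.per x, hG.per x], hF.cd.mul hG.cd, ?_⟩, ?_⟩
      · rw [hiter]; exact hsum.1.2.2
      · rw [hiter]; exact hsum.2
    refine ⟨hmem, ?_⟩
    have hstep : cNorm (k+1) σ (fun x => F x * G x) =
        supAbs (fun x => F x * G x) + cNorm k σ (fun x => deriv F x * G x + F x * deriv G x) := by
      rw [cNorm_succ, hde]
    rw [hstep]
    set a := cNorm (k+1) σ F with ha
    set bb := cNorm (k+1) σ G with hb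
    have ha0 : 0 ≤ a := cNorm_nonneg _ _ _
    have hb0 : 0 ≤ bb := cNorm_nonneg _ _ _
    have e1 : cNorm k σ (deriv F) ≤ a := by
      rw [ha, cNorm_succ]; linarith [supAbs_nonneg F]
    have e2 : cNorm k σ (deriv G) ≤ bb := by
      rw [hb, cNorm_succ]; linarith [supAbs_nonneg G]
    have e3 : cNorm k σ F ≤ 4 * a := hFdn
    have e4 : cNorm k σ G ≤ 4 * bb := hGdn
    have h1 : supAbs (fun x => F x * G x) ≤ a * bb := by
      apply supAbs_le (by positivity)
      intro x
      rw [norm_mul]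
      have hfb : ‖F x‖ ≤ a := by
        have := hF.abs_le_cNorm (Nat.zero_le (k+1)) x
        simpa using this
      have hgb : ‖G x‖ ≤ bb := by
        have := hG.abs_le_cNorm (Nat.zero_le (k+1)) x
        simpa using this
      exact mul_le_mul hfb hgb (norm_nonneg _) ha0
    have h2 : cNorm k σ (fun x => deriv F x * G x + F x * deriv G x) ≤
        cNorm k σ (fun x => deriv F x * G x) + cNorm k σ (fun x => F x * deriv G x) :=
      cNorm_add_le hσ0 hp1 hp2
    have h3 : cNorm k σ (fun x => deriv F x * G x) ≤ C * a * (4 * bb) := by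
      calc cNorm k σ (fun x => deriv F x * G x) ≤ C * cNorm k σ (deriv F) * cNorm k σ G := hp1n
        _ ≤ C * a * (4 * bb) := by
          apply mul_le_mul
          · exact mul_le_mul_of_nonneg_left e1 (by linarith)
          · exact e4
          · exact cNorm_nonneg _ _ _
          · positivity
    have h4 : cNorm k σ (fun x => F x * deriv G x) ≤ C * (4*a) * bb := by
      calc cNorm k σ (fun x => F x * deriv G x) ≤ C * cNorm k σ F * cNorm k σ (deriv G) := hp2n
        _ ≤ C * (4*a) * bb := by
          apply mul_le_mul
          · exact mul_le_mul_of_nonneg_left e3 (by linarith)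
          · exact e2
          · exact cNorm_nonneg _ _ _
          · positivity
    nlinarith

lemma translate_holder_small (hσ0 : 0 < σ) {g : ℝ → ℂ} (hg : LittleHolder σ g) :
    ∀ η > (0:ℝ), ∃ δ > (0:ℝ), ∀ t : ℝ, |t| < δ → ∀ x y : ℝ, x ≠ y →
      ‖(g (x + t) - g x) - (g (y + t) - g y)‖ ≤ η * |x - y| ^ σ := by
  intro η hη
  obtain ⟨δ, hδ, hb⟩ := littleHolder_bound hg (η/2) (by linarith)
  refine ⟨δ, hδ, fun t ht x y hne => ?_⟩
  rcases eq_or_ne t 0 with rfl | ht0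
  · simp [Real.rpow_nonneg (abs_nonneg (x - y)), mul_nonneg hη.le
      (Real.rpow_nonneg (abs_nonneg (x - y)) σ)]
  rcases lt_or_ge |x - y| δ with hlt | hge
  · have hne2 : x + t ≠ y + t := fun hc => hne (by linarith)
    have habs : |x + t - (y + t)| = |x - y| := by ring_nf
    have h1 := hb (x + t) (y + t) hne2 (by rw [habs]; exact hlt)
    rw [habs] at h1
    have h2 := hb x y hne hlt
    have e : g (x + t) - g x - (g (y + t) - g y) = (g (x + t) - g (y + t)) - (g x - g y) := by
      ring
    rw [e]
    calc ‖_‖ ≤ _ + _ := norm_sub_le _ _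
      _ ≤ η/2 * |x - y| ^ σ + η/2 * |x - y| ^ σ := add_le_add h1 h2
      _ = η * |x - y| ^ σ := by ring
  · have hxt : x + t ≠ x := fun hc => ht0 (by linarith)
    have hyt : y + t ≠ y := fun hc => ht0 (by linarith)
    have habs : ∀ z : ℝ, |z + t - z| = |t| := fun z => by ring_nf
    have h1 := hb (x + t) x hxt (by rw [habs]; exact ht)
    have h2 := hb (y + t) y hyt (by rw [habs]; exact ht)
    rw [habs] at h1 h2
    have hmono : |t| ^ σ ≤ |x - y| ^ σ :=
      Real.rpow_le_rpow (abs_nonneg t) (le_trans ht.le hge) hσ0.le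
    calc ‖_‖ ≤ _ + _ := norm_sub_le _ _
      _ ≤ η/2 * |t| ^ σ + η/2 * |t| ^ σ := add_le_add h1 h2
      _ ≤ η/2 * |x - y| ^ σ + η/2 * |x - y| ^ σ := by
          have := mul_le_mul_of_nonneg_left hmono (by linarith : (0:ℝ) ≤ η/2)
          linarith
      _ = η * |x - y| ^ σ := by ring

lemma hasDerivAt_shift {ψ : ℝ → ℂ} (hψ : Differentiable ℝ ψ) (x t : ℝ) :
    HasDerivAt (fun s => ψ (x + s)) (deriv ψ (x + t)) t :=
  HasDerivAt.comp_const_add x t ((hψ (x + t)).hasDerivAt)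

lemma taylor_pt {ψ : ℝ → ℂ} (hψ : Differentiable ℝ ψ) {h : ℝ} (hh : 0 < h) (x : ℝ) {ε : ℝ}
    (hb : ∀ t ∈ Set.Icc (0:ℝ) h, ‖deriv ψ (x + t) - deriv ψ x‖ ≤ ε) :
    ‖(ψ (x + h) - ψ x) / (h:ℂ) - deriv ψ x‖ ≤ ε := by
  set Θ : ℝ → ℂ := fun t => ψ (x + t) - t • (deriv ψ x) with hΘ
  have hder : ∀ t ∈ Set.Icc (0:ℝ) h, HasDerivAt Θ (deriv ψ (x + t) - deriv ψ x) t := by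
    intro t _
    have h1 := hasDerivAt_shift hψ x t
    have h2 : HasDerivAt (fun s : ℝ => s • (deriv ψ x)) ((1:ℝ) • deriv ψ x) t :=
      (hasDerivAt_id t).smul_const (deriv ψ x)
    exact (h1.sub h2).congr_deriv (by rw [one_smul])
  have hmvt := mvt_bound hh.le hder hb
  have hΘval : Θ h - Θ 0 = (ψ (x + h) - ψ x) - h • (deriv ψ x) := by
    simp [hΘ]
    ring
  have hε : 0 ≤ ε := le_trans (norm_nonneg _) (hb 0 (Set.mem_Icc.2 ⟨le_refl 0, hh.le⟩))
  have key : ‖(ψ (x + h) - ψ x) - h • (deriv ψ x)‖ ≤ ε * h := by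
    rw [← hΘval]
    simpa using hmvt
  have hne : (h:ℂ) ≠ 0 := by exact_mod_cast hh.ne'
  have hexp : (ψ (x + h) - ψ x) / (h:ℂ) - deriv ψ x =
      ((ψ (x + h) - ψ x) - h • (deriv ψ x)) / (h:ℂ) := by
    rw [Complex.real_smul]
    field_simp
  rw [hexp, norm_div, Complex.norm_real, Real.norm_eq_abs, abs_of_pos hh, div_le_iff₀ hh]
  exact key

lemma taylor_pair {ψ : ℝ → ℂ} (hψ : Differentiable ℝ ψ) {h : ℝ} (hh : 0 < h) (x y : ℝ) {ε : ℝ}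
    (hε : 0 ≤ ε)
    (hb : ∀ t ∈ Set.Icc (0:ℝ) h, ‖(deriv ψ (x + t) - deriv ψ x)
      - (deriv ψ (y + t) - deriv ψ y)‖ ≤ ε) :
    ‖((ψ (x + h) - ψ x) / (h:ℂ) - deriv ψ x)
      - ((ψ (y + h) - ψ y) / (h:ℂ) - deriv ψ y)‖ ≤ ε := by
  set Θ : ℝ → ℂ := fun t => (ψ (x + t) - ψ (y + t)) - t • (deriv ψ x - deriv ψ y) with hΘ
  have hder : ∀ t ∈ Set.Icc (0:ℝ) h, HasDerivAt Θ
      ((deriv ψ (x + t) - deriv ψ x) - (deriv ψ (y + t) - deriv ψ y)) t := by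
    intro t _
    have h1 := hasDerivAt_shift hψ x t
    have h2 := hasDerivAt_shift hψ y t
    have h3 : HasDerivAt (fun s : ℝ => s • (deriv ψ x - deriv ψ y))
        ((1:ℝ) • (deriv ψ x - deriv ψ y)) t :=
      (hasDerivAt_id t).smul_const _
    have h4 := (h1.sub h2).sub h3
    exact h4.congr_deriv (by rw [one_smul]; ring)
  have hmvt := mvt_bound hh.le hder hb
  have hΘval : Θ h - Θ 0 = ((ψ (x + h) - ψ x) - (ψ (y + h) - ψ y))
      - h • (deriv ψ x - deriv ψ y) := by
    simp [hΘ]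
    ring
  have key : ‖((ψ (x + h) - ψ x) - (ψ (y + h) - ψ y))
      - h • (deriv ψ x - deriv ψ y)‖ ≤ ε * h := by
    rw [← hΘval]
    simpa using hmvt
  have hne : (h:ℂ) ≠ 0 := by exact_mod_cast hh.ne'
  have hexp : ((ψ (x + h) - ψ x) / (h:ℂ) - deriv ψ x) - ((ψ (y + h) - ψ y) / (h:ℂ) - deriv ψ y)
      = (((ψ (x + h) - ψ x) - (ψ (y + h) - ψ y)) - h • (deriv ψ x - deriv ψ y)) / (h:ℂ) := by
    rw [Complex.real_smul]
    field_simp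
    ring
  rw [hexp, norm_div, Complex.norm_real, Real.norm_eq_abs, abs_of_pos hh, div_le_iff₀ hh]
  exact key

lemma contDiff_translate {k : WithTop ℕ∞} {f : ℝ → ℂ} (hf : ContDiff ℝ k f) (h : ℝ) :
    ContDiff ℝ k (fun x => f (x + h)) :=
  hf.comp ((contDiff_id (E := ℝ)).add contDiff_const)

lemma rpow_small (hσ0 : 0 < σ) {c : ℝ} (hc : 0 < c) :
    ∃ δ > (0:ℝ), δ ≤ 1 ∧ ∀ h : ℝ, 0 < h → h < δ → h ^ σ ≤ c := by
  refine ⟨min 1 (c ^ (1/σ : ℝ)), lt_min one_pos (Real.rpow_pos_of_pos hc _), min_le_left _ _,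
    fun h hh hlt => ?_⟩
  have h1 : h ^ σ ≤ (c ^ (1/σ : ℝ)) ^ σ := by
    apply Real.rpow_le_rpow hh.le _ hσ0.le
    exact le_trans hlt.le (min_le_right _ _)
  refine h1.trans_eq ?_
  rw [← Real.rpow_mul hc.le, one_div, inv_mul_cancel₀ hσ0.ne', Real.rpow_one]

lemma translate_conv (hσ0 : 0 < σ) (hσ1 : σ < 1) {k : ℕ} {φ : ℝ → ℂ} (hφ : hMem k σ φ) :
    ∀ η > (0:ℝ), ∃ δ > (0:ℝ), ∀ h : ℝ, 0 < h → h < δ →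
      cNorm k σ (fun x => φ (x + h) - φ x) ≤ η := by
  intro η hη
  set B := cNorm k σ φ + 1 with hB
  have hB0 : 0 < B := by have := cNorm_nonneg k σ φ; linarith
  obtain ⟨δE, hδE, hbE⟩ := translate_holder_small hσ0 hφ.2 (η/2) (by linarith)
  obtain ⟨δ₂, hδ₂, hδ₂1, hb₂⟩ := rpow_small hσ0
    (show (0:ℝ) < η / (2 * (k+1) * B) by positivity)
  refine ⟨min δE δ₂, lt_min hδE hδ₂, fun h hh hlt => ?_⟩
  have hlt1 : h < δE := lt_of_lt_of_le hlt (min_le_left _ _)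
  have hlt2 : h < δ₂ := lt_of_lt_of_le hlt (min_le_right _ _)
  have hh1 : h ≤ 1 := le_trans hlt2.le hδ₂1
  have hhσ : h ≤ h ^ σ := by
    nth_rewrite 1 [← Real.rpow_one h]
    exact Real.rpow_le_rpow_of_exponent_ge hh hh1 hσ1.le
  have hiter : ∀ j : ℕ, j ≤ k → iteratedDeriv j (fun x => φ (x + h) - φ x) =
      fun x => iteratedDeriv j φ (x + h) - iteratedDeriv j φ x := by
    intro j hj
    have h1 := iterD_sub (k := j)
      ((contDiff_translate hφ.cd h).of_le (by exact_mod_cast hj))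
      (hφ.cd.of_le (by exact_mod_cast hj))
    rw [h1, iterD_translate]
  have hsup : ∀ j : ℕ, j ≤ k → supAbs (iteratedDeriv j (fun x => φ (x + h) - φ x)) ≤
      B * h ^ σ := by
    intro j hj
    rw [hiter j hj]
    apply supAbs_le (by positivity)
    intro x
    rcases lt_or_ge j k with hjk | hjk
    · have hdiff : Differentiable ℝ (iteratedDeriv j φ) := hφ.diffIterD hjk
      have hder : deriv (iteratedDeriv j φ) = iteratedDeriv (j+1) φ := iteratedDeriv_succ.symm
      have hlip := lipBound hdiff (M := cNorm k σ φ)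
        (fun t => by rw [hder]; exact hφ.abs_le_cNorm hjk t) (x + h) x
      have : |x + h - x| = h := by rw [show x + h - x = h by ring, abs_of_pos hh]
      rw [this] at hlip
      calc ‖_‖ ≤ cNorm k σ φ * h := hlip
        _ ≤ B * h ^ σ := by nlinarith [cNorm_nonneg k σ φ]
    · have hjk' : j = k := le_antisymm hj hjk
      subst hjk'
      have h1 := hφ.abs_sub_le (x + h) x
      have : |x + h - x| = h := by rw [show x + h - x = h by ring, abs_of_pos hh]
      rw [this] at h1
      calc ‖_‖ ≤ cNorm j σ φ * h ^ σ := h1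
        _ ≤ B * h ^ σ := by
            have : (0:ℝ) ≤ h ^ σ := Real.rpow_nonneg hh.le σ
            nlinarith
  have hsemi : hSemi σ (iteratedDeriv k (fun x => φ (x + h) - φ x)) ≤ η/2 := by
    rw [hiter k le_rfl]
    apply hSemi_le (by linarith)
    intro x y hxy
    exact hbE h (by rw [abs_of_pos hh]; exact hlt1) x y hxy
  have hsum : ∑ j ∈ Finset.range (k+1), supAbs (iteratedDeriv j (fun x => φ (x + h) - φ x)) ≤
      (k+1) * (B * h ^ σ) := by
    calc _ ≤ ∑ _j ∈ Finset.range (k+1), B * h ^ σ :=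
          Finset.sum_le_sum (fun j hj => hsup j (Nat.lt_succ_iff.1 (Finset.mem_range.1 hj)))
      _ = (k+1) * (B * h ^ σ) := by
          rw [Finset.sum_const, Finset.card_range]
          push_cast
          ring
  have hkey : h ^ σ ≤ η / (2 * (k+1) * B) := hb₂ h hh hlt2
  have hfin : (k+1 : ℝ) * (B * h ^ σ) ≤ η/2 := by
    have hBne : B ≠ 0 := hB0.ne'
    have hkne : ((k:ℝ)+1) ≠ 0 := by positivity
    have h2 : (k+1 : ℝ) * B * (h ^ σ) ≤ (k+1 : ℝ) * B * (η / (2 * (k+1) * B)) :=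
      mul_le_mul_of_nonneg_left hkey (by positivity)
    have h3 : (k+1 : ℝ) * B * (η / (2 * (k+1) * B)) = η/2 := by
      field_simp
    calc (k+1 : ℝ) * (B * h ^ σ) = (k+1 : ℝ) * B * (h ^ σ) := by ring
      _ ≤ (k+1 : ℝ) * B * (η / (2 * (k+1) * B)) := h2
      _ = η/2 := h3
  unfold cNorm
  have hcomb := add_le_add hsum hsemi
  linarith

lemma dq_conv (hσ0 : 0 < σ) (hσ1 : σ < 1) {k : ℕ} {φ : ℝ → ℂ} (hφ : hMem (k+1) σ φ) :
    ∀ η > (0:ℝ), ∃ δ > (0:ℝ), ∀ h : ℝ, 0 < h → h < δ →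
      cNorm k σ (fun x => (φ (x + h) - φ x) / (h:ℂ) - deriv φ x) ≤ η := by
  intro η hη
  set B := cNorm (k+1) σ φ + 1 with hB
  have hB0 : 0 < B := by have := cNorm_nonneg (k+1) σ φ; linarith
  have hφd : hMem k σ (deriv φ) := hMem_deriv hσ0 hφ
  have hlittle : LittleHolder σ (iteratedDeriv (k+1) φ) := hφ.2
  obtain ⟨δE, hδE, hbE⟩ := translate_holder_small hσ0 hlittle (η/2) (by linarith)
  obtain ⟨δ₂, hδ₂, hδ₂1, hb₂⟩ := rpow_small hσ0
    (show (0:ℝ) < η / (2 * (k+1) * B) by positivity)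
  refine ⟨min δE δ₂, lt_min hδE hδ₂, fun h hh hlt => ?_⟩
  have hlt1 : h < δE := lt_of_lt_of_le hlt (min_le_left _ _)
  have hlt2 : h < δ₂ := lt_of_lt_of_le hlt (min_le_right _ _)
  have hh1 : h ≤ 1 := le_trans hlt2.le hδ₂1
  have hne : (h:ℂ) ≠ 0 := by exact_mod_cast hh.ne'
  have hiter : ∀ j : ℕ, j ≤ k → iteratedDeriv j
      (fun x => (φ (x + h) - φ x) / (h:ℂ) - deriv φ x) =
      fun x => (iteratedDeriv j φ (x + h) - iteratedDeriv j φ x) / (h:ℂ)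
        - iteratedDeriv (j+1) φ x := by
    intro j hj
    have hjk : (j : ℕ∞) ≤ (k : ℕ∞) := by exact_mod_cast hj
    have hcd1 : ContDiff ℝ j (fun x => φ (x + h) - φ x) :=
      ((contDiff_translate hφ.cd h).sub hφ.cd).of_le
        (by exact_mod_cast le_trans hj (Nat.le_succ k))
    have e1 : (fun x => (φ (x + h) - φ x) / (h:ℂ) - deriv φ x) =
        (fun x => (1/(h:ℂ)) * (φ (x + h) - φ x) - deriv φ x) := by
      funext x; field_simp
    rw [e1]
    have h2 := iterD_sub (k := j) ((contDiff_const (c := 1/(h:ℂ))).mul hcd1)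
      (hφd.cd.of_le (by exact_mod_cast hj))
    rw [h2, iterD_cmul _ hcd1]
    have h3 := iterD_sub (k := j)
      ((contDiff_translate hφ.cd h).of_le
        (by exact_mod_cast le_trans hj (Nat.le_succ k)))
      (hφ.cd.of_le (by exact_mod_cast le_trans hj (Nat.le_succ k)))
    rw [h3, iterD_translate]
    funext x
    rw [show iteratedDeriv j (deriv φ) = iteratedDeriv (j+1) φ from iteratedDeriv_succ'.symm]
    field_simp
  have hsup : ∀ j : ℕ, j ≤ k → supAbs (iteratedDeriv j
      (fun x => (φ (x + h) - φ x) / (h:ℂ) - deriv φ x)) ≤ B * h ^ σ := by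
    intro j hj
    rw [hiter j hj]
    apply supAbs_le (by positivity)
    intro x
    have hψdiff : Differentiable ℝ (iteratedDeriv j φ) := hφ.diffIterD (by omega)
    have hψder : deriv (iteratedDeriv j φ) = iteratedDeriv (j+1) φ := iteratedDeriv_succ.symm
    have hgoal : ‖(iteratedDeriv j φ (x + h) - iteratedDeriv j φ x) / (h:ℂ)
        - deriv (iteratedDeriv j φ) x‖ ≤ B * h ^ σ := by
      apply taylor_pt hψdiff hh x
      intro t ht
      rw [hψder]
      rcases lt_or_ge j k with hjk | hjk
      · have hdiff2 : Differentiable ℝ (iteratedDeriv (j+1) φ) := hφ.diffIterD (by omega)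
        have hder2 : deriv (iteratedDeriv (j+1) φ) = iteratedDeriv (j+2) φ :=
          iteratedDeriv_succ.symm
        have hlip := lipBound hdiff2 (M := cNorm (k+1) σ φ)
          (fun s => by rw [hder2]; exact hφ.abs_le_cNorm (by omega) s) (x + t) x
        have habs : |x + t - x| = t := by
          rw [show x + t - x = t by ring, abs_of_nonneg ht.1]
        rw [habs] at hlip
        calc ‖_‖ ≤ cNorm (k+1) σ φ * t := hlip
          _ ≤ B * h ^ σ := by
              have h1 : t ≤ h ^ σ := by
                calc t ≤ h := ht.2
                  _ ≤ h ^ σ := by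
                      nth_rewrite 1 [← Real.rpow_one h]
                      exact Real.rpow_le_rpow_of_exponent_ge hh hh1 hσ1.le
              nlinarith [cNorm_nonneg (k+1) σ φ, ht.1]
      · have hjk' : j = k := le_antisymm hj hjk
        subst hjk'
        have h1 := hφ.abs_sub_le (x + t) x
        have habs : |x + t - x| = t := by
          rw [show x + t - x = t by ring, abs_of_nonneg ht.1]
        rw [habs] at h1
        calc ‖_‖ ≤ cNorm (j+1) σ φ * t ^ σ := h1
          _ ≤ B * h ^ σ := by
              have h2 : t ^ σ ≤ h ^ σ := Real.rpow_le_rpow ht.1 ht.2 hσ0.le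
              have h3 : (0:ℝ) ≤ t ^ σ := Real.rpow_nonneg ht.1 σ
              nlinarith [cNorm_nonneg (j+1) σ φ]
    rwa [hψder] at hgoal
  have hsemi : hSemi σ (iteratedDeriv k
      (fun x => (φ (x + h) - φ x) / (h:ℂ) - deriv φ x)) ≤ η/2 := by
    rw [hiter k le_rfl]
    apply hSemi_le (by linarith)
    intro x y hxy
    have hψdiff : Differentiable ℝ (iteratedDeriv k φ) := hφ.diffIterD (by omega)
    have hψder : deriv (iteratedDeriv k φ) = iteratedDeriv (k+1) φ := iteratedDeriv_succ.symm
    have hgoal := taylor_pair hψdiff hh x y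
      (ε := η/2 * |x - y| ^ σ)
      (mul_nonneg (by linarith) (Real.rpow_nonneg (abs_nonneg _) σ)) ?_
    · rw [hψder] at hgoal
      exact hgoal
    · intro t ht
      rw [hψder]
      rcases eq_or_lt_of_le ht.1 with rfl | ht0
      · simp [mul_nonneg (by linarith : (0:ℝ) ≤ η/2) (Real.rpow_nonneg (abs_nonneg (x-y)) σ)]
      · exact hbE t (by rw [abs_of_pos ht0]; linarith [ht.2]) x y hxy
  have hsum : ∑ j ∈ Finset.range (k+1), supAbs (iteratedDeriv j
      (fun x => (φ (x + h) - φ x) / (h:ℂ) - deriv φ x)) ≤ (k+1) * (B * h ^ σ) := by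
    calc _ ≤ ∑ _j ∈ Finset.range (k+1), B * h ^ σ :=
          Finset.sum_le_sum (fun j hj => hsup j (Nat.lt_succ_iff.1 (Finset.mem_range.1 hj)))
      _ = (k+1) * (B * h ^ σ) := by
          rw [Finset.sum_const, Finset.card_range]
          push_cast
          ring
  have hkey : h ^ σ ≤ η / (2 * (k+1) * B) := hb₂ h hh hlt2
  have hfin : (k+1 : ℝ) * (B * h ^ σ) ≤ η/2 := by
    have hBne : B ≠ 0 := hB0.ne'
    have hkne : ((k:ℝ)+1) ≠ 0 := by positivity
    have h2 : (k+1 : ℝ) * B * (h ^ σ) ≤ (k+1 : ℝ) * B * (η / (2 * (k+1) * B)) :=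
      mul_le_mul_of_nonneg_left hkey (by positivity)
    have h3 : (k+1 : ℝ) * B * (η / (2 * (k+1) * B)) = η/2 := by
      field_simp
    calc (k+1 : ℝ) * (B * h ^ σ) = (k+1 : ℝ) * B * (h ^ σ) := by ring
      _ ≤ (k+1 : ℝ) * B * (η / (2 * (k+1) * B)) := h2
      _ = η/2 := h3
  unfold cNorm
  have hcomb := add_le_add hsum hsemi
  linarith

open Filter in
lemma limitLemma (hσ0 : 0 < σ) (hσ1 : σ < 1) {T : ℕ} {V : ℕ → ℝ → ℂ} {w : ℝ → ℂ}
    (hV : ∀ p, hMem T σ (V p))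
    (hC : ∀ ε > (0:ℝ), ∃ N : ℕ, ∀ p ≥ N, ∀ q ≥ N, cNorm T σ (fun x => V p x - V q x) ≤ ε)
    (hw : ∀ x, Tendsto (fun p => V p x) atTop (nhds (w x))) :
    hMem T σ w := by
  classical
  have hsub : ∀ p q, hMem T σ (fun x => V p x - V q x) :=
    fun p q => hMem_sub hσ0 (hV p) (hV q)
  have hjd : ∀ j, j ≤ T → ∀ p q, iteratedDeriv j (fun x => V p x - V q x) =
      fun x => iteratedDeriv j (V p) x - iteratedDeriv j (V q) x := by
    intro j hj p q
    exact iterD_sub ((hV p).cd.of_le (by exact_mod_cast hj))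
      ((hV q).cd.of_le (by exact_mod_cast hj))
  have hbnd : ∀ j, j ≤ T → ∀ p q x, ‖iteratedDeriv j (V p) x
      - iteratedDeriv j (V q) x‖ ≤ cNorm T σ (fun x => V p x - V q x) := by
    intro j hj p q x
    have := (hsub p q).abs_le_cNorm hj x
    rwa [hjd j hj p q] at this
  have hcauchy : ∀ j, j ≤ T → ∀ x, CauchySeq (fun p => iteratedDeriv j (V p) x) := by
    intro j hj x
    rw [Metric.cauchySeq_iff]
    intro ε hε
    obtain ⟨N, hN⟩ := hC (ε/2) (by linarith)
    refine ⟨N, fun p hp q hq => ?_⟩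
    have h1 := (hbnd j hj p q x).trans (hN p hp q hq)
    rw [Complex.dist_eq]
    linarith
  have hex : ∀ j, j ≤ T → ∀ x, ∃ L, Tendsto (fun p => iteratedDeriv j (V p) x) atTop (nhds L) :=
    fun j hj x => cauchySeq_tendsto_of_complete (hcauchy j hj x)
  set F : ℕ → ℝ → ℂ := fun j x => if hj : j ≤ T then Classical.choose (hex j hj x) else 0
    with hFdef
  have hFt : ∀ j (hj : j ≤ T) (x : ℝ),
      Tendsto (fun p => iteratedDeriv j (V p) x) atTop (nhds (F j x)) := by
    intro j hj x
    have : F j x = Classical.choose (hex j hj x) := by rw [hFdef]; simp [hj]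
    rw [this]
    exact Classical.choose_spec (hex j hj x)
  have hunif : ∀ j, j ≤ T → ∀ ε > (0:ℝ), ∃ N : ℕ, ∀ p ≥ N, ∀ x,
      ‖iteratedDeriv j (V p) x - F j x‖ ≤ ε := by
    intro j hj ε hε
    obtain ⟨N, hN⟩ := hC (ε/2) (by linarith)
    refine ⟨N, fun p hp x => ?_⟩
    have htend : Tendsto (fun q => ‖iteratedDeriv j (V p) x
        - iteratedDeriv j (V q) x‖) atTop
        (nhds (‖iteratedDeriv j (V p) x - F j x‖)) :=
      (continuous_norm.tendsto _).comp (tendsto_const_nhds.sub (hFt j hj x))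
    apply le_of_tendsto htend
    filter_upwards [eventually_ge_atTop N] with q hq
    exact ((hbnd j hj p q x).trans (hN p hp q hq)).trans (by linarith)
  have htu : ∀ j, j ≤ T → TendstoUniformly (fun p x => iteratedDeriv j (V p) x) (F j) atTop := by
    intro j hj
    rw [Metric.tendstoUniformly_iff]
    intro ε hε
    obtain ⟨N, hN⟩ := hunif j hj (ε/2) (by linarith)
    filter_upwards [eventually_ge_atTop N] with p hp x
    rw [dist_comm, Complex.dist_eq]
    calc ‖iteratedDeriv j (V p) x - F j x‖ ≤ ε/2 := hN p hp x
      _ < ε := by linarith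
  have hcont : ∀ j, j ≤ T → Continuous (F j) := by
    intro j hj
    apply (htu j hj).continuous
    exact (Eventually.of_forall (fun p => (hV p).contIterD hj)).frequently
  have hder : ∀ j, j < T → ∀ x, HasDerivAt (F j) (F (j+1) x) x := by
    intro j hj x
    apply hasDerivAt_of_tendstoUniformly (f := fun p x => iteratedDeriv j (V p) x)
      (f' := fun p x => iteratedDeriv (j+1) (V p) x) (htu (j+1) hj)
    · apply Eventually.of_forall
      intro p y
      have h1 : HasDerivAt (iteratedDeriv j (V p)) (deriv (iteratedDeriv j (V p)) y) y :=
        (((hV p).diffIterD hj) y).hasDerivAt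
      rwa [← iteratedDeriv_succ] at h1
    · exact fun y => hFt j (le_of_lt hj) y
  have hiterF : ∀ j, j ≤ T → iteratedDeriv j (F 0) = F j := by
    intro j
    induction j with
    | zero => intro _; simp
    | succ j ih =>
      intro hj
      have hjT : j < T := by omega
      rw [iteratedDeriv_succ, ih (by omega)]
      funext x
      exact (hder j hjT x).deriv
  have hcd : ContDiff ℝ T (F 0) := by
    rw [contDiff_nat_iff_iteratedDeriv]
    constructor
    · intro m hm; rw [hiterF m hm]; exact hcont m hm
    · intro m hm
      rw [hiterF m (le_of_lt hm)]
      intro x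
      exact (hder m hm x).differentiableAt
  have hper : Per (F 0) := by
    intro x
    have h1 := hFt 0 (Nat.zero_le T) (x + 2*π)
    have h2 := hFt 0 (Nat.zero_le T) x
    simp only [iteratedDeriv_zero] at h1 h2
    have he : (fun p => V p (x + 2*π)) = fun p => V p x := funext fun p => (hV p).per x
    rw [he] at h1
    exact tendsto_nhds_unique h1 h2
  have htail : ∀ ε > (0:ℝ), ∃ N : ℕ, ∀ p ≥ N, ∀ x y : ℝ,
      ‖(F T x - iteratedDeriv T (V p) x) - (F T y - iteratedDeriv T (V p) y)‖ ≤
        ε * |x - y| ^ σ := by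
    intro ε hε
    obtain ⟨N, hN⟩ := hC ε hε
    refine ⟨N, fun p hp x y => ?_⟩
    have htq : ∀ q, q ≥ N → ‖(iteratedDeriv T (V q) x - iteratedDeriv T (V p) x)
        - (iteratedDeriv T (V q) y - iteratedDeriv T (V p) y)‖ ≤ ε * |x - y| ^ σ := by
      intro q hq
      have h1 := (hsub q p).abs_sub_le x y
      rw [hjd T le_rfl q p] at h1
      refine h1.trans ?_
      exact mul_le_mul_of_nonneg_right (hN q hq p hp) (Real.rpow_nonneg (abs_nonneg _) σ)
    have htend : Tendsto (fun q => ‖(iteratedDeriv T (V q) x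
        - iteratedDeriv T (V p) x) - (iteratedDeriv T (V q) y - iteratedDeriv T (V p) y)‖)
        atTop (nhds (‖(F T x - iteratedDeriv T (V p) x)
        - (F T y - iteratedDeriv T (V p) y)‖)) := by
      apply (continuous_norm.tendsto _).comp
      exact ((hFt T le_rfl x).sub tendsto_const_nhds).sub
        ((hFt T le_rfl y).sub tendsto_const_nhds)
    apply le_of_tendsto htend
    filter_upwards [eventually_ge_atTop N] with q hq
    exact htq q hq
  have hfin : HolderFin σ (F T) := by
    obtain ⟨N, hN⟩ := htail 1 one_pos
    apply holderFin_of (M := 1 + cNorm T σ (V N))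
    intro x y hxy
    have h1 := hN N (le_refl N) x y
    have h2 := (hV N).abs_sub_le x y
    have e : F T x - F T y = ((F T x - iteratedDeriv T (V N) x)
        - (F T y - iteratedDeriv T (V N) y))
        + (iteratedDeriv T (V N) x - iteratedDeriv T (V N) y) := by ring
    rw [e]
    calc ‖_‖ ≤ _ + _ := norm_add_le _ _
      _ ≤ 1 * |x - y| ^ σ + cNorm T σ (V N) * |x - y| ^ σ := add_le_add h1 h2
      _ = (1 + cNorm T σ (V N)) * |x - y| ^ σ := by ring
  have hlit : LittleHolder σ (F T) := by
    apply littleHolder_of hσ0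
    intro η hη
    obtain ⟨N, hN⟩ := htail (η/2) (by linarith)
    obtain ⟨δ, hδ, hb⟩ := littleHolder_bound (hV N).2 (η/2) (by linarith)
    refine ⟨δ, hδ, fun x y hne hlt => ?_⟩
    have h1 := hN N (le_refl N) x y
    have h2 := hb x y hne hlt
    have e : F T x - F T y = ((F T x - iteratedDeriv T (V N) x)
        - (F T y - iteratedDeriv T (V N) y))
        + (iteratedDeriv T (V N) x - iteratedDeriv T (V N) y) := by ring
    rw [e]
    calc ‖_‖ ≤ _ + _ := norm_add_le _ _
      _ ≤ η/2 * |x - y| ^ σ + η/2 * |x - y| ^ σ := add_le_add h1 h2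
      _ = η * |x - y| ^ σ := by ring
  have hw0 : w = F 0 := by
    funext x
    refine tendsto_nhds_unique (hw x) ?_
    have := hFt 0 (Nat.zero_le T) x
    simpa using this
  rw [hw0]
  refine ⟨⟨hper, hcd, ?_⟩, ?_⟩
  · rw [hiterF T le_rfl]; exact hfin
  · rw [hiterF T le_rfl]; exact hlit

lemma supAbs0_le_cNorm {k : ℕ} {f : ℝ → ℂ} : supAbs f ≤ cNorm k σ f := by
  have := supAbs_le_cNorm (σ := σ) (k := k) (f := f) (Nat.zero_le k)
  simpa using this

lemma abs_le_cNorm0 {k : ℕ} {g : ℝ → ℂ} (hg : hMem k σ g) (x : ℝ) :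
    ‖g x‖ ≤ cNorm k σ g := by
  have := hg.abs_le_cNorm (Nat.zero_le k) x
  simpa using this

lemma hMem_of_deriv (hσ0 : 0 < σ) {k : ℕ} {u : ℝ → ℂ} (hper : Per u)
    (hdiff : Differentiable ℝ u) (hd : hMem k σ (deriv u)) : hMem (k+1) σ u := by
  have hit : ∀ m : ℕ, iteratedDeriv (m+1) u = iteratedDeriv m (deriv u) :=
    fun m => iteratedDeriv_succ'
  refine ⟨⟨hper, ?_, ?_⟩, ?_⟩
  · rw [contDiff_nat_iff_iteratedDeriv]
    constructor
    · intro m hm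
      match m with
      | 0 => simpa using hdiff.continuous
      | m+1 =>
        rw [hit m]
        exact hd.contIterD (by omega)
    · intro m hm
      match m with
      | 0 => simpa using hdiff
      | m+1 =>
        rw [hit m]
        exact hd.diffIterD (by omega)
  · rw [hit k]; exact hd.1.2.2
  · rw [hit k]; exact hd.2

lemma hMem_dq (hσ0 : 0 < σ) {k : ℕ} {φ : ℝ → ℂ} (hφ : hMem k σ φ) {h : ℝ} (hh : h ≠ 0) :
    hMem k σ (fun x => (φ (x + h) - φ x) / (h:ℂ)) := by
  have hne : (h:ℂ) ≠ 0 := by exact_mod_cast hh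
  have e : (fun x => (φ (x + h) - φ x) / (h:ℂ)) =
      fun x => (1/(h:ℂ)) * (φ (x + h) - φ x) := by
    funext x; field_simp
  rw [e]
  exact hMem_cmul hσ0 _ (hMem_sub hσ0 (hMem_translate hσ0 h hφ) hφ)

end Spaces

end Aux

set_option maxHeartbeats 1000000 in
open Filter in
/-- Bootstrapping regularity: if the resolvent problem for `b·D^{2m}` is uniquely
solvable with estimates at the level `α = n + σ` and `b ∈ h^β_per` with `β = α + 1`,
then it is uniquely solvable with estimates at the level `β`, with a constant `K`
depending only on `κ` and `‖b‖_β`. -/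
theorem regularity_bootstrap
    (m n : ℕ) (hm : 1 ≤ m) (σ : ℝ) (hσ : σ ∈ Set.Ioo (0 : ℝ) 1)
    (ω κ : ℝ) (hω : 0 < ω) (hκ : 1 ≤ κ)
    (b : ℝ → ℂ) (hb : hMem (n + 1) σ b)
    (hsol : ∀ lam : ℂ, ω ≤ lam.re → ∀ f, hMem n σ f →
      ∃ u, (hMem (2 * m + n) σ u ∧
          (∀ x, lam * u x + (-1 : ℂ) ^ m * b x * iteratedDeriv (2 * m) u x = f x) ∧
          cNorm (2 * m + n) σ u ≤ κ * cNorm n σ f ∧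
          ‖lam‖ * cNorm n σ u ≤ κ * cNorm n σ f) ∧
        ∀ v, hMem (2 * m + n) σ v →
          (∀ x, lam * v x + (-1 : ℂ) ^ m * b x * iteratedDeriv (2 * m) v x = f x) → v = u) :
    ∃ K > (0 : ℝ), ∀ lam : ℂ, ω ≤ lam.re → ∀ f, hMem (n + 1) σ f →
      ∃ u, (hMem (2 * m + n + 1) σ u ∧
          (∀ x, lam * u x + (-1 : ℂ) ^ m * b x * iteratedDeriv (2 * m) u x = f x) ∧
          cNorm (2 * m + n + 1) σ u ≤ K * cNorm (n + 1) σ f ∧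
          ‖lam‖ * cNorm (n + 1) σ u ≤ K * cNorm (n + 1) σ f) ∧
        ∀ v, hMem (2 * m + n + 1) σ v →
          (∀ x, lam * v x + (-1 : ℂ) ^ m * b x * iteratedDeriv (2 * m) v x = f x) → v = u := by

  obtain ⟨hσ0, hσ1⟩ := hσ
  obtain ⟨Cp, hCp1, hCp⟩ := prodBound hσ0 hσ1 n
  have hB0 : (0:ℝ) ≤ cNorm (n+1) σ b := cNorm_nonneg _ _ _
  have hCpB : (0:ℝ) ≤ Cp * cNorm (n+1) σ b * κ :=
    mul_nonneg (mul_nonneg (by linarith) hB0) (by linarith)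
  have hpow : (0:ℝ) < 4^(2*m+1) := by positivity
  set C₁ : ℝ := 1 + 4 * (Cp * cNorm (n+1) σ b * κ) with hC₁def
  have hC₁0 : 1 ≤ C₁ := by rw [hC₁def]; linarith
  set K : ℝ := κ * (4^(2*m+1) + C₁ + 4) + 1 with hKdef
  have hK0 : 0 < K := by
    rw [hKdef]
    nlinarith
  refine ⟨K, hK0, ?_⟩
  intro lam hlam f hf
  have habsc : ‖(-1:ℂ)^m‖ = 1 := by
    rw [norm_pow]; simp
  -- basic memberships
  obtain ⟨hfα, hfαn⟩ := hMem_down hσ0 hσ1 hf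
  obtain ⟨u, ⟨huT, hueq, hest1, hest2⟩, huniq⟩ := hsol lam hlam f hfα
  have hT1 : (1 : WithTop ℕ∞) ≤ ((2*m+n : ℕ) : WithTop ℕ∞) := by
    exact_mod_cast (show 1 ≤ 2*m+n by omega)
  have hudiff : Differentiable ℝ u := huT.cd.differentiable (zero_lt_one.trans_le hT1).ne'
  have hbdiff : Differentiable ℝ b := hb.cd.differentiable
    (by simp)
  have hb' : hMem n σ (deriv b) := hMem_deriv hσ0 hb
  have hf' : hMem n σ (deriv f) := hMem_deriv hσ0 hf
  have hbα : hMem n σ b := (hMem_down hσ0 hσ1 hb).1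
  obtain ⟨hUm, hUn⟩ := hMem_iterD hσ0 (2*m) (k := n) huT
  have hprodg := hCp (deriv b) (iteratedDeriv (2*m) u) hb' hUm
  have hg : hMem n σ (fun x => deriv f x
      - (-1:ℂ)^m * (deriv b x * iteratedDeriv (2*m) u x)) :=
    hMem_sub hσ0 hf' (hMem_cmul hσ0 _ hprodg.1)
  -- the sequence of difference quotients
  set hp : ℕ → ℝ := fun p => (1/2:ℝ)^(p+1) with hhpdef
  have hhp : ∀ p, 0 < hp p := fun p => by rw [hhpdef]; positivity
  have hsmall : ∀ δ > (0:ℝ), ∃ N : ℕ, ∀ p ≥ N, hp p < δ := by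
    intro δ hδ
    obtain ⟨N, hN⟩ := exists_pow_lt_of_lt_one hδ (by norm_num : (1/2:ℝ) < 1)
    refine ⟨N, fun p hp' => ?_⟩
    calc hp p = (1/2:ℝ)^(p+1) := by rw [hhpdef]
      _ ≤ (1/2:ℝ)^N := pow_le_pow_of_le_one (by norm_num) (by norm_num) (by omega)
      _ < δ := hN
  set W : ℕ → ℝ → ℂ := fun p x => (u (x + hp p) - u x) / ((hp p : ℝ) : ℂ) with hWdef
  have hWmem : ∀ p, hMem (2*m+n) σ (W p) := fun p => hMem_dq hσ0 huT (hhp p).ne'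
  have hcdu : ∀ p : ℕ, ContDiff ℝ (((2*m : ℕ)) : WithTop ℕ∞) (fun x => u (x + hp p) - u x) := fun p =>
    ((contDiff_translate huT.cd _).sub huT.cd).of_le
      (by exact_mod_cast (show 2*m ≤ 2*m+n by omega))
  have hWiter : ∀ p, iteratedDeriv (2*m) (W p) =
      fun x => (iteratedDeriv (2*m) u (x + hp p) - iteratedDeriv (2*m) u x) / ((hp p : ℝ) : ℂ) := by
    intro p
    have hne : ((hp p : ℝ) : ℂ) ≠ 0 := by exact_mod_cast (hhp p).ne'
    have e : W p = fun x => (1/((hp p : ℝ):ℂ)) * (u (x + hp p) - u x) := by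
      funext x; rw [hWdef]; field_simp
    rw [e, iterD_cmul _ (hcdu p),
      iterD_sub ((contDiff_translate huT.cd _).of_le
        (by exact_mod_cast (show 2*m ≤ 2*m+n by omega)))
        (huT.cd.of_le (by exact_mod_cast (show 2*m ≤ 2*m+n by omega))),
      iterD_translate]
    funext x
    field_simp
  set G : ℕ → ℝ → ℂ := fun p x => (f (x + hp p) - f x) / ((hp p : ℝ) : ℂ)
    - (-1:ℂ)^m * ((b (x + hp p) - b x) / ((hp p : ℝ) : ℂ) * iteratedDeriv (2*m) u (x + hp p))
    with hGdef
  have hGmem : ∀ p, hMem n σ (G p) := by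
    intro p
    apply hMem_sub hσ0 (hMem_dq hσ0 hfα (hhp p).ne')
    apply hMem_cmul hσ0
    exact (hCp _ _ (hMem_dq hσ0 hbα (hhp p).ne') (hMem_translate hσ0 _ hUm)).1
  have hWeq : ∀ p x, lam * W p x + (-1:ℂ)^m * b x * iteratedDeriv (2*m) (W p) x = G p x := by
    intro p x
    rw [hWiter p, hWdef, hGdef]
    have hne : ((hp p : ℝ) : ℂ) ≠ 0 := by exact_mod_cast (hhp p).ne'
    field_simp
    linear_combination hueq (x + hp p) - hueq x
  -- difference of solutions bound
  have hsoldiff : ∀ (w₁ w₂ g₁ g₂ : ℝ → ℂ), hMem (2*m+n) σ w₁ → hMem (2*m+n) σ w₂ →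
      hMem n σ g₁ → hMem n σ g₂ →
      (∀ x, lam * w₁ x + (-1:ℂ)^m * b x * iteratedDeriv (2*m) w₁ x = g₁ x) →
      (∀ x, lam * w₂ x + (-1:ℂ)^m * b x * iteratedDeriv (2*m) w₂ x = g₂ x) →
      cNorm (2*m+n) σ (fun x => w₁ x - w₂ x) ≤ κ * cNorm n σ (fun x => g₁ x - g₂ x) := by
    intro w₁ w₂ g₁ g₂ hw₁ hw₂ hg₁ hg₂ he₁ he₂
    have hgd : hMem n σ (fun x => g₁ x - g₂ x) := hMem_sub hσ0 hg₁ hg₂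
    obtain ⟨u', ⟨hu'T, hu'eq, hu'1, _⟩, hu'uniq⟩ := hsol lam hlam _ hgd
    have hwd : hMem (2*m+n) σ (fun x => w₁ x - w₂ x) := hMem_sub hσ0 hw₁ hw₂
    have hid := iterD_sub (k := 2*m)
      (hw₁.cd.of_le (by exact_mod_cast (show 2*m ≤ 2*m+n by omega)))
      (hw₂.cd.of_le (by exact_mod_cast (show 2*m ≤ 2*m+n by omega)))
    have heqd : ∀ x, lam * (w₁ x - w₂ x)
        + (-1:ℂ)^m * b x * iteratedDeriv (2*m) (fun x => w₁ x - w₂ x) x = g₁ x - g₂ x := by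
      intro x
      rw [hid]
      linear_combination he₁ x - he₂ x
    have := hu'uniq _ hwd heqd
    rw [this]
    exact hu'1
  -- convergence of the right-hand sides
  have hGconv : ∀ ε > (0:ℝ), ∃ N : ℕ, ∀ p ≥ N,
      cNorm n σ (fun x => G p x - (deriv f x
        - (-1:ℂ)^m * (deriv b x * iteratedDeriv (2*m) u x))) ≤ ε := by
    intro ε hε
    set M : ℝ := cNorm n σ (iteratedDeriv (2*m) u) + 1 with hMdef
    have hM0 : 0 < M := by rw [hMdef]; have := cNorm_nonneg n σ (iteratedDeriv (2*m) u); linarith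
    set Bb : ℝ := cNorm n σ (deriv b) + 1 with hBbdef
    have hBb0 : 0 < Bb := by rw [hBbdef]; have := cNorm_nonneg n σ (deriv b); linarith
    obtain ⟨δ₁, hδ₁, hc₁⟩ := dq_conv hσ0 hσ1 hf (ε/4) (by linarith)
    obtain ⟨δ₂, hδ₂, hc₂⟩ := dq_conv hσ0 hσ1 hb (ε/(4*Cp*M)) (by positivity)
    obtain ⟨δ₃, hδ₃, hc₃⟩ := translate_conv hσ0 hσ1 hUm (ε/(4*Cp*Bb)) (by positivity)
    obtain ⟨N, hN⟩ := hsmall (min δ₁ (min δ₂ δ₃)) (lt_min hδ₁ (lt_min hδ₂ hδ₃))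
    refine ⟨N, fun p hpN => ?_⟩
    have hlt := hN p hpN
    have hlt1 : hp p < δ₁ := lt_of_lt_of_le hlt (min_le_left _ _)
    have hlt2 : hp p < δ₂ := lt_of_lt_of_le hlt ((min_le_right _ _).trans (min_le_left _ _))
    have hlt3 : hp p < δ₃ := lt_of_lt_of_le hlt ((min_le_right _ _).trans (min_le_right _ _))
    have hne : ((hp p : ℝ) : ℂ) ≠ 0 := by exact_mod_cast (hhp p).ne'
    -- memberships of the pieces
    have hA : hMem n σ (fun x => (f (x + hp p) - f x) / ((hp p : ℝ):ℂ) - deriv f x) :=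
      hMem_sub hσ0 (hMem_dq hσ0 hfα (hhp p).ne') hf'
    have hBmem : hMem n σ (fun x => (b (x + hp p) - b x) / ((hp p : ℝ):ℂ) - deriv b x) :=
      hMem_sub hσ0 (hMem_dq hσ0 hbα (hhp p).ne') hb'
    have hτU : hMem n σ (fun x => iteratedDeriv (2*m) u (x + hp p)) :=
      hMem_translate hσ0 _ hUm
    have hτUd : hMem n σ (fun x => iteratedDeriv (2*m) u (x + hp p)
        - iteratedDeriv (2*m) u x) := hMem_sub hσ0 hτU hUm
    have hP1 := hCp _ _ hBmem hτU
    have hP2 := hCp _ _ hb' hτUd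
    have hinner : hMem n σ (fun x =>
        ((b (x + hp p) - b x) / ((hp p : ℝ):ℂ) - deriv b x)
          * iteratedDeriv (2*m) u (x + hp p)
        + deriv b x * (iteratedDeriv (2*m) u (x + hp p) - iteratedDeriv (2*m) u x)) :=
      hMem_add hσ0 hP1.1 hP2.1
    have hdecomp : (fun x => G p x - (deriv f x
        - (-1:ℂ)^m * (deriv b x * iteratedDeriv (2*m) u x))) =
        (fun x => ((f (x + hp p) - f x) / ((hp p : ℝ):ℂ) - deriv f x)
          - (-1:ℂ)^m * (((b (x + hp p) - b x) / ((hp p : ℝ):ℂ) - deriv b x)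
              * iteratedDeriv (2*m) u (x + hp p)
            + deriv b x * (iteratedDeriv (2*m) u (x + hp p)
              - iteratedDeriv (2*m) u x))) := by
      funext x
      rw [hGdef]
      ring
    rw [hdecomp]
    have h1 := cNorm_sub_le hσ0 hA (hMem_cmul hσ0 ((-1:ℂ)^m) hinner)
    have h2 := cNorm_cmul_le hσ0 ((-1:ℂ)^m) hinner
    rw [habsc, one_mul] at h2
    have h3 := cNorm_add_le hσ0 hP1.1 hP2.1
    have h4 := hP1.2
    have h5 := hP2.2
    -- numeric bounds
    have e1 : cNorm n σ (fun x => (f (x + hp p) - f x) / ((hp p : ℝ):ℂ) - deriv f x) ≤ ε/4 :=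
      hc₁ (hp p) (hhp p) hlt1
    have e2 : cNorm n σ (fun x => (b (x + hp p) - b x) / ((hp p : ℝ):ℂ) - deriv b x) ≤
        ε/(4*Cp*M) := hc₂ (hp p) (hhp p) hlt2
    have e3 : cNorm n σ (fun x => iteratedDeriv (2*m) u (x + hp p)
        - iteratedDeriv (2*m) u x) ≤ ε/(4*Cp*Bb) := hc₃ (hp p) (hhp p) hlt3
    have e4 : cNorm n σ (fun x => iteratedDeriv (2*m) u (x + hp p)) ≤ M := by
      have := cNorm_translate_le hσ0 (hp p) hUm
      rw [hMdef]; linarith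
    have e5 : cNorm n σ (deriv b) ≤ Bb := by rw [hBbdef]; linarith
    have hq1 : cNorm n σ (fun x => ((b (x + hp p) - b x) / ((hp p : ℝ):ℂ) - deriv b x)
        * iteratedDeriv (2*m) u (x + hp p)) ≤ ε/4 := by
      refine h4.trans ?_
      have hc : Cp * cNorm n σ (fun x => (b (x + hp p) - b x) / ((hp p:ℝ):ℂ) - deriv b x)
          * cNorm n σ (fun x => iteratedDeriv (2*m) u (x + hp p)) ≤
          Cp * (ε/(4*Cp*M)) * M := by
        apply mul_le_mul
        · exact mul_le_mul_of_nonneg_left e2 (by linarith)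
        · exact e4
        · exact cNorm_nonneg _ _ _
        · positivity
      refine hc.trans (le_of_eq ?_)
      have hCpne : Cp ≠ 0 := by linarith
      have hMne : M ≠ 0 := hM0.ne'
      field_simp
    have hq2 : cNorm n σ (fun x => deriv b x * (iteratedDeriv (2*m) u (x + hp p)
        - iteratedDeriv (2*m) u x)) ≤ ε/4 := by
      refine h5.trans ?_
      have hc : Cp * cNorm n σ (deriv b) * cNorm n σ (fun x =>
          iteratedDeriv (2*m) u (x + hp p) - iteratedDeriv (2*m) u x) ≤
          Cp * Bb * (ε/(4*Cp*Bb)) := by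
        apply mul_le_mul
        · exact mul_le_mul_of_nonneg_left e5 (by linarith)
        · exact e3
        · exact cNorm_nonneg _ _ _
        · positivity
      refine hc.trans (le_of_eq ?_)
      have hCpne : Cp ≠ 0 := by linarith
      have hBbne : Bb ≠ 0 := hBb0.ne'
      field_simp
    linarith
  -- Cauchy property of the sequence W
  have hWC : ∀ ε > (0:ℝ), ∃ N : ℕ, ∀ p ≥ N, ∀ q ≥ N,
      cNorm (2*m+n) σ (fun x => W p x - W q x) ≤ ε := by
    intro ε hε
    obtain ⟨N, hN⟩ := hGconv (ε/(2*κ)) (by positivity)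
    refine ⟨N, fun p hpN q hqN => ?_⟩
    have h1 := hsoldiff (W p) (W q) (G p) (G q) (hWmem p) (hWmem q) (hGmem p) (hGmem q)
      (hWeq p) (hWeq q)
    have e : (fun x => G p x - G q x) = fun x =>
        (G p x - (deriv f x - (-1:ℂ)^m * (deriv b x * iteratedDeriv (2*m) u x)))
        - (G q x - (deriv f x - (-1:ℂ)^m * (deriv b x * iteratedDeriv (2*m) u x))) := by
      funext x; ring
    have hGpg : hMem n σ (fun x => G p x - (deriv f x
        - (-1:ℂ)^m * (deriv b x * iteratedDeriv (2*m) u x))) := hMem_sub hσ0 (hGmem p) hg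
    have hGqg : hMem n σ (fun x => G q x - (deriv f x
        - (-1:ℂ)^m * (deriv b x * iteratedDeriv (2*m) u x))) := hMem_sub hσ0 (hGmem q) hg
    have h2 : cNorm n σ (fun x => G p x - G q x) ≤ ε/(2*κ) + ε/(2*κ) := by
      rw [e]
      exact (cNorm_sub_le hσ0 hGpg hGqg).trans (add_le_add (hN p hpN) (hN q hqN))
    refine h1.trans ?_
    have hκ0 : (0:ℝ) < κ := by linarith
    calc κ * cNorm n σ (fun x => G p x - G q x) ≤ κ * (ε/(2*κ) + ε/(2*κ)) :=
          mul_le_mul_of_nonneg_left h2 hκ0.le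
      _ = ε * (κ/κ) := by ring
      _ = ε := by rw [div_self hκ0.ne']; ring
  -- pointwise convergence to the derivative
  have huT' : hMem ((2*m+n-1)+1) σ u := by
    rw [show (2*m+n-1)+1 = 2*m+n from by omega]; exact huT
  have hwp : ∀ x, Tendsto (fun p => W p x) atTop (nhds (deriv u x)) := by
    intro x
    rw [Metric.tendsto_atTop]
    intro ε hε
    obtain ⟨δ, hδ, hc⟩ := dq_conv hσ0 hσ1 huT' (ε/2) (by linarith)
    obtain ⟨N, hN⟩ := hsmall δ hδ
    refine ⟨N, fun p hpN => ?_⟩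
    have hd : hMem (2*m+n-1) σ (fun y => (u (y + hp p) - u y) / ((hp p : ℝ):ℂ) - deriv u y) :=
      hMem_sub hσ0 (hMem_dq hσ0 (hMem_down hσ0 hσ1 huT').1 (hhp p).ne') (hMem_deriv hσ0 huT')
    have h1 := (abs_le_cNorm0 hd x).trans (hc (hp p) (hhp p) (hN p hpN))
    rw [Complex.dist_eq]
    have e : W p x - deriv u x = (u (x + hp p) - u x) / ((hp p : ℝ):ℂ) - deriv u x := by
      rw [hWdef]
    rw [e]
    linarith
  have hvT : hMem (2*m+n) σ (deriv u) := limitLemma hσ0 hσ1 hWmem hWC hwp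
  have hu1 : hMem (2*m+n+1) σ u := hMem_of_deriv hσ0 huT.per hudiff hvT
  -- the equation satisfied by the derivative
  have hUdiff : Differentiable ℝ (iteratedDeriv (2*m) u) :=
    hu1.diffIterD (by omega)
  have hder7 : deriv (iteratedDeriv (2*m) u) = iteratedDeriv (2*m) (deriv u) := by
    rw [← iteratedDeriv_succ, iteratedDeriv_succ']
  have hveq : ∀ x, lam * deriv u x + (-1:ℂ)^m * b x * iteratedDeriv (2*m) (deriv u) x =
      deriv f x - (-1:ℂ)^m * (deriv b x * iteratedDeriv (2*m) u x) := by
    intro x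
    have h1 : HasDerivAt u (deriv u x) x := (hudiff x).hasDerivAt
    have h2 : HasDerivAt b (deriv b x) x := (hbdiff x).hasDerivAt
    have h3 : HasDerivAt (iteratedDeriv (2*m) u) (deriv (iteratedDeriv (2*m) u) x) x :=
      (hUdiff x).hasDerivAt
    have h4 : HasDerivAt (fun y => lam * u y
        + (-1:ℂ)^m * (b y * iteratedDeriv (2*m) u y))
        (lam * deriv u x + (-1:ℂ)^m * (deriv b x * iteratedDeriv (2*m) u x
          + b x * deriv (iteratedDeriv (2*m) u) x)) x :=
      (h1.const_mul lam).add ((h2.mul h3).const_mul ((-1:ℂ)^m))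
    have h5 : (fun y => lam * u y + (-1:ℂ)^m * (b y * iteratedDeriv (2*m) u y)) = f := by
      funext y
      linear_combination hueq y
    rw [h5] at h4
    have h6 := h4.deriv
    rw [← hder7]
    linear_combination -h6
  obtain ⟨ug, ⟨hugT, hugeq, hug1, hug2⟩, huguniq⟩ := hsol lam hlam
    (fun x => deriv f x - (-1:ℂ)^m * (deriv b x * iteratedDeriv (2*m) u x)) hg
  have hvu : deriv u = ug := huguniq (deriv u) hvT hveq
  -- norm of the right-hand side g
  have hgbound : cNorm n σ (fun x => deriv f x
      - (-1:ℂ)^m * (deriv b x * iteratedDeriv (2*m) u x)) ≤ C₁ * cNorm (n+1) σ f := by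
    have c1 := cNorm_sub_le hσ0 hf' (hMem_cmul hσ0 ((-1:ℂ)^m) hprodg.1)
    have c2 := cNorm_cmul_le hσ0 ((-1:ℂ)^m) hprodg.1
    rw [habsc, one_mul] at c2
    have c3 := hprodg.2
    have c4 : cNorm n σ (deriv b) ≤ cNorm (n+1) σ b := by
      have := cNorm_succ (σ := σ) n b
      linarith [supAbs_nonneg b]
    have c5 : cNorm n σ (iteratedDeriv (2*m) u) ≤ cNorm (2*m+n) σ u := hUn
    have c6 : cNorm (2*m+n) σ u ≤ κ * cNorm n σ f := hest1
    have c7 : cNorm n σ f ≤ 4 * cNorm (n+1) σ f := hfαn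
    have hnn1 : (0:ℝ) ≤ cNorm n σ (deriv b) := cNorm_nonneg _ _ _
    have hnn2 : (0:ℝ) ≤ cNorm n σ (iteratedDeriv (2*m) u) := cNorm_nonneg _ _ _
    have hnn3 : (0:ℝ) ≤ cNorm (n+1) σ f := cNorm_nonneg _ _ _
    have hnn4 : (0:ℝ) ≤ cNorm n σ f := cNorm_nonneg _ _ _
    have hd1 : cNorm n σ (deriv f) ≤ cNorm (n+1) σ f := by
      have := cNorm_succ (σ := σ) n f
      linarith [supAbs_nonneg f]
    have hstep : Cp * cNorm n σ (deriv b) * cNorm n σ (iteratedDeriv (2*m) u) ≤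
        Cp * cNorm (n+1) σ b * (4 * κ * cNorm (n+1) σ f) := by
      have hb1 : Cp * cNorm n σ (deriv b) ≤ Cp * cNorm (n+1) σ b :=
        mul_le_mul_of_nonneg_left c4 (by linarith)
      have hb2 : cNorm n σ (iteratedDeriv (2*m) u) ≤ 4 * κ * cNorm (n+1) σ f := by
        calc cNorm n σ (iteratedDeriv (2*m) u) ≤ κ * cNorm n σ f := c5.trans c6
          _ ≤ κ * (4 * cNorm (n+1) σ f) := mul_le_mul_of_nonneg_left c7 (by linarith)
          _ = 4 * κ * cNorm (n+1) σ f := by ring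
      calc Cp * cNorm n σ (deriv b) * cNorm n σ (iteratedDeriv (2*m) u) ≤
            (Cp * cNorm (n+1) σ b) * (4 * κ * cNorm (n+1) σ f) := by
            apply mul_le_mul hb1 hb2 hnn2
            positivity
        _ = Cp * cNorm (n+1) σ b * (4 * κ * cNorm (n+1) σ f) := by ring
    rw [hC₁def]
    nlinarith
  -- final estimates
  have hNβf0 : (0:ℝ) ≤ cNorm (n+1) σ f := cNorm_nonneg _ _ _
  have hNαu : cNorm n σ u ≤ 4^(2*m) * cNorm (2*m+n) σ u := by
    have huTm : hMem (n + 2*m) σ u := by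
      rw [show n + 2*m = 2*m+n from by omega]; exact huT
    have := (hMem_down_many hσ0 hσ1 (2*m) huTm).2
    rwa [show n + 2*m = 2*m+n from by omega] at this
  have hsupu : supAbs u ≤ cNorm n σ u := supAbs0_le_cNorm
  have hvbound : cNorm (2*m+n) σ (deriv u) ≤ κ * (C₁ * cNorm (n+1) σ f) := by
    rw [hvu]
    exact hug1.trans (mul_le_mul_of_nonneg_left hgbound (by linarith))
  have hest1' : cNorm (2*m+n+1) σ u ≤ K * cNorm (n+1) σ f := by
    have hcs := cNorm_succ (σ := σ) (2*m+n) u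
    have hch : cNorm n σ u ≤ 4^(2*m) * (κ * (4 * cNorm (n+1) σ f)) := by
      calc cNorm n σ u ≤ 4^(2*m) * cNorm (2*m+n) σ u := hNαu
        _ ≤ 4^(2*m) * (κ * cNorm n σ f) := by
            apply mul_le_mul_of_nonneg_left hest1 (by positivity)
        _ ≤ 4^(2*m) * (κ * (4 * cNorm (n+1) σ f)) := by
            apply mul_le_mul_of_nonneg_left _ (by positivity)
            exact mul_le_mul_of_nonneg_left hfαn (by linarith)
    have h4m : (4:ℝ)^(2*m) * 4 = 4^(2*m+1) := by rw [pow_succ]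
    have hsup2 : supAbs u ≤ 4^(2*m+1) * κ * cNorm (n+1) σ f := by
      refine (hsupu.trans hch).trans (le_of_eq ?_)
      rw [← h4m]; ring
    have hv2 : cNorm (2*m+n) σ (deriv u) ≤ κ * C₁ * cNorm (n+1) σ f :=
      hvbound.trans (le_of_eq (by ring))
    rw [hcs, hKdef]
    nlinarith [mul_nonneg (show (0:ℝ) ≤ κ by linarith) hNβf0, hNβf0]
  have hest2' : ‖lam‖ * cNorm (n+1) σ u ≤ K * cNorm (n+1) σ f := by
    have hcs := cNorm_succ (σ := σ) n u
    have habs0 : (0:ℝ) ≤ ‖lam‖ := norm_nonneg _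
    have h1 : ‖lam‖ * supAbs u ≤ κ * (4 * cNorm (n+1) σ f) := by
      calc ‖lam‖ * supAbs u ≤ ‖lam‖ * cNorm n σ u :=
            mul_le_mul_of_nonneg_left hsupu habs0
        _ ≤ κ * cNorm n σ f := hest2
        _ ≤ κ * (4 * cNorm (n+1) σ f) := mul_le_mul_of_nonneg_left hfαn (by linarith)
    have h2 : ‖lam‖ * cNorm n σ (deriv u) ≤ κ * (C₁ * cNorm (n+1) σ f) := by
      rw [hvu]
      exact hug2.trans (mul_le_mul_of_nonneg_left hgbound (by linarith))
    have hgoal : ‖lam‖ * cNorm (n+1) σ u =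
        ‖lam‖ * supAbs u + ‖lam‖ * cNorm n σ (deriv u) := by
      rw [hcs]; ring
    rw [hgoal, hKdef]
    nlinarith [mul_nonneg (mul_nonneg (show (0:ℝ) ≤ κ by linarith) hNβf0) hpow.le,
      hNβf0]
  refine ⟨u, ⟨hu1, hueq, hest1', hest2'⟩, ?_⟩
  intro v' hv' hv'eq
  have hv'T : hMem (2*m+n) σ v' := (hMem_down hσ0 hσ1 hv').1
  exact huniq v' hv'T hv'eq
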